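/- arXiv:2111.08292 — 7 statements merged into one kernel-verified Lean document; each statement's English description precedes it below -/
import Mathlib

section
/- For every N > 0, the quantity sup over φ in S^N of ∫₀^T ∫_Z g(z)² · (φ(s,z) + 1) ν(dz) ds is finite. -/
open MeasureTheory Set
open scoped ENNReal

lemma young' (x b : ℝ) (hb : 0 ≤ b) : x * b ≤ b * Real.log b - b + Real.exp x := by
  rcases eq_or_lt_of_le hb with h | hb
  · simp [← h, (Real.exp_pos x).le]
  · have h1 : Real.log (Real.exp x / b) ≤ Real.exp x / b - 1 :=
      Real.log_le_sub_one_of_pos (by positivity)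
    have h2 : Real.log (Real.exp x / b) = x - Real.log b := by
      rw [Real.log_div (Real.exp_pos x).ne' hb.ne', Real.log_exp]
    have h3 : b * (x - Real.log b) ≤ b * (Real.exp x / b - 1) := by
      rw [← h2]; exact mul_le_mul_of_nonneg_left h1 hb.le
    have h4 : b * (Real.exp x / b - 1) = Real.exp x - b := by field_simp
    nlinarith [h3, h4]

lemma exp_sub_one' (x : ℝ) : Real.exp x - 1 ≤ x * Real.exp x := by
  have h := Real.add_one_le_exp (-x)
  have h2 : (-x + 1) * Real.exp x ≤ Real.exp (-x) * Real.exp x :=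
    mul_le_mul_of_nonneg_right h (Real.exp_pos x).le
  rw [← Real.exp_add, neg_add_cancel, Real.exp_zero] at h2
  nlinarith

lemma ell_nonneg' (b : ℝ) (hb : 0 ≤ b) : 0 ≤ b * Real.log b - b + 1 := by
  rcases eq_or_lt_of_le hb with h | hb
  · simp [← h]
  · have h1 : Real.log b⁻¹ ≤ b⁻¹ - 1 := Real.log_le_sub_one_of_pos (by positivity)
    rw [Real.log_inv] at h1
    have hb' : b * b⁻¹ = 1 := mul_inv_cancel₀ hb.ne'
    nlinarith [mul_le_mul_of_nonneg_left h1 hb.le]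

lemma pointwise' (δ a b : ℝ) (hδ : 0 < δ) (ha : 0 ≤ a) (hb : 0 ≤ b) :
    a * (b + 1) ≤ δ⁻¹ * (b * Real.log b - b + 1) +
      (a * (1 + Real.exp δ) + (if 1 ≤ a then δ⁻¹ * Real.exp (δ * a) else 0)) := by
  have hy := young' (δ * a) b hb
  have hδi : 0 < δ⁻¹ := inv_pos.mpr hδ
  have hab : a * b ≤ δ⁻¹ * (b * Real.log b - b + 1) + δ⁻¹ * (Real.exp (δ * a) - 1) := by
    have h := mul_le_mul_of_nonneg_left hy hδi.le
    have hcancel : δ⁻¹ * (δ * a * b) = a * b := by field_simp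
    nlinarith
  split_ifs with h1
  · have ha' : a ≤ a * (1 + Real.exp δ) := by nlinarith [Real.exp_pos δ]
    have he : δ⁻¹ * (Real.exp (δ * a) - 1) ≤ δ⁻¹ * Real.exp (δ * a) := by nlinarith
    nlinarith
  · push_neg at h1
    have h2 : Real.exp (δ * a) - 1 ≤ (δ * a) * Real.exp (δ * a) := exp_sub_one' _
    have h3 : Real.exp (δ * a) ≤ Real.exp δ := Real.exp_le_exp.mpr (by nlinarith)
    have h5 : (δ * a) * Real.exp (δ * a) ≤ (δ * a) * Real.exp δ :=
      mul_le_mul_of_nonneg_left h3 (by positivity)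
    have h6 : δ⁻¹ * ((δ * a) * Real.exp δ) = a * Real.exp δ := by field_simp
    nlinarith

/-- For every `N > 0`, the supremum over `φ ∈ S^N` of
`∫₀^T ∫_Z g(z)² (φ(s,z)+1) ν(dz) ds` is finite. -/
theorem stmt0
    {Z : Type*} [TopologicalSpace Z] [PolishSpace Z] [LocallyCompactSpace Z]
    [MeasurableSpace Z] [BorelSpace Z]
    (ν : Measure Z) [IsFiniteMeasureOnCompacts ν] [SigmaFinite ν]
    (T : ℝ) (hT : 0 < T)
    (ℓ : ℝ → ℝ) (hℓ : ∀ r : ℝ, 0 ≤ r → ℓ r = r * Real.log r - r + 1)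
    (g : Z → ℝ) (hgmeas : Measurable g)
    (hgL2 : ∫⁻ z, ENNReal.ofReal (g z ^ 2) ∂ν < ⊤)
    (hgexp : ∃ δ : ℝ, 0 < δ ∧ ∀ E : Set Z, MeasurableSet E → ν E < ⊤ →
        ∫⁻ z in E, ENNReal.ofReal (Real.exp (δ * g z ^ 2)) ∂ν < ⊤)
    (N : ℝ) (hN : 0 < N) :
    (⨆ φ ∈ {φ : ℝ × Z → ℝ | Measurable φ ∧ (∀ p, 0 ≤ φ p) ∧
        ∫⁻ s in Icc (0 : ℝ) T, ∫⁻ z, ENNReal.ofReal (ℓ (φ (s, z))) ∂ν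
          ≤ ENNReal.ofReal N},
      ∫⁻ s in Icc (0 : ℝ) T, ∫⁻ z, ENNReal.ofReal (g z ^ 2 * (φ (s, z) + 1)) ∂ν) < ⊤ := by
  obtain ⟨δ, hδ, hexp⟩ := hgexp
  set δ' := ENNReal.ofReal δ with hδ'def
  have hδ'0 : δ' ≠ 0 := (ENNReal.ofReal_pos.mpr hδ).ne'
  have hδ't : δ'⁻¹ ≠ ⊤ := ENNReal.inv_ne_top.mpr hδ'0
  set A : Set Z := {z | 1 ≤ g z ^ 2} with hAdef
  have hAmeas : MeasurableSet A :=
    measurableSet_le measurable_const (hgmeas.pow_const 2)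
  have hνA : ν A < ⊤ := by
    have hle := mul_meas_ge_le_lintegral₀
      (f := fun z => ENNReal.ofReal (g z ^ 2)) (μ := ν)
      (((hgmeas.pow_const 2).ennreal_ofReal).aemeasurable) 1
    have hset : {z | (1 : ℝ≥0∞) ≤ ENNReal.ofReal (g z ^ 2)} = A := by
      ext z; simp [hAdef, ENNReal.one_le_ofReal]
    rw [hset, one_mul] at hle
    exact lt_of_le_of_lt hle hgL2
  -- the dominating function
  set H : Z → ℝ≥0∞ := fun z => ENNReal.ofReal (g z ^ 2 * (1 + Real.exp δ) +
      (if 1 ≤ g z ^ 2 then δ⁻¹ * Real.exp (δ * g z ^ 2) else 0)) with hHdef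
  have hre_nonneg : ∀ z : Z, (0:ℝ) ≤ (if 1 ≤ g z ^ 2 then δ⁻¹ * Real.exp (δ * g z ^ 2) else 0) := by
    intro z; split_ifs with h
    · positivity
    · exact le_refl 0
  have Hmeas : Measurable H := by
    apply Measurable.ennreal_ofReal
    apply Measurable.add
    · exact (hgmeas.pow_const 2).mul_const _
    · exact Measurable.ite hAmeas
        ((((hgmeas.pow_const 2).const_mul δ).exp).const_mul δ⁻¹) measurable_const
  have HT : ∫⁻ z, H z ∂ν < ⊤ := by
    have hHsplit : ∀ z, H z = ENNReal.ofReal (g z ^ 2 * (1 + Real.exp δ)) +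
        A.indicator (fun z => ENNReal.ofReal (δ⁻¹ * Real.exp (δ * g z ^ 2))) z := by
      intro z
      simp only [hHdef]
      rw [ENNReal.ofReal_add (by positivity) (hre_nonneg z)]
      congr 1
      simp only [Set.indicator, hAdef, Set.mem_setOf_eq]
      split_ifs with h
      · rfl
      · exact ENNReal.ofReal_zero
    calc ∫⁻ z, H z ∂ν
        = ∫⁻ z, (ENNReal.ofReal (g z ^ 2 * (1 + Real.exp δ)) +
            A.indicator (fun z => ENNReal.ofReal (δ⁻¹ * Real.exp (δ * g z ^ 2))) z) ∂ν := by
          exact lintegral_congr hHsplit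
      _ = (∫⁻ z, ENNReal.ofReal (g z ^ 2 * (1 + Real.exp δ)) ∂ν) +
            ∫⁻ z in A, ENNReal.ofReal (δ⁻¹ * Real.exp (δ * g z ^ 2)) ∂ν := by
          rw [lintegral_add_left ((hgmeas.pow_const 2).mul_const _).ennreal_ofReal,
            lintegral_indicator hAmeas _]
      _ = (∫⁻ z, ENNReal.ofReal (g z ^ 2) ∂ν) * ENNReal.ofReal (1 + Real.exp δ) +
            δ'⁻¹ * ∫⁻ z in A, ENNReal.ofReal (Real.exp (δ * g z ^ 2)) ∂ν := by
          congr 1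
          · rw [← lintegral_mul_const' _ _ ENNReal.ofReal_ne_top]
            exact lintegral_congr fun z => ENNReal.ofReal_mul (sq_nonneg _)
          · rw [← lintegral_const_mul' _ _ hδ't]
            refine lintegral_congr fun z => ?_
            rw [ENNReal.ofReal_mul (by positivity), ENNReal.ofReal_inv_of_pos hδ]
      _ < ⊤ := by
          apply ENNReal.add_lt_top.mpr
          constructor
          · exact ENNReal.mul_lt_top hgL2 ENNReal.ofReal_lt_top
          · exact ENNReal.mul_lt_top hδ't.lt_top (hexp A hAmeas hνA)
  -- the bound
  refine lt_of_le_of_lt (iSup₂_le fun φ hφ => ?_)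
    (show δ'⁻¹ * ENNReal.ofReal N + (∫⁻ z, H z ∂ν) * volume (Icc (0:ℝ) T) < ⊤ from ?_)
  · obtain ⟨hφm, hφ0, hφN⟩ := hφ
    have key : ∀ s : ℝ, ∀ z : Z, ENNReal.ofReal (g z ^ 2 * (φ (s, z) + 1)) ≤
        δ'⁻¹ * ENNReal.ofReal (ℓ (φ (s, z))) + H z := by
      intro s z
      have hb := hφ0 (s, z)
      have hpt := pointwise' δ (g z ^ 2) (φ (s, z)) hδ (sq_nonneg _) hb
      calc ENNReal.ofReal (g z ^ 2 * (φ (s, z) + 1))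
          ≤ ENNReal.ofReal (δ⁻¹ * (φ (s, z) * Real.log (φ (s, z)) - φ (s, z) + 1) +
              (g z ^ 2 * (1 + Real.exp δ) +
                (if 1 ≤ g z ^ 2 then δ⁻¹ * Real.exp (δ * g z ^ 2) else 0))) :=
            ENNReal.ofReal_le_ofReal hpt
        _ = ENNReal.ofReal (δ⁻¹ * (φ (s, z) * Real.log (φ (s, z)) - φ (s, z) + 1)) + H z := by
            rw [hHdef, ENNReal.ofReal_add
              (mul_nonneg (by positivity) (ell_nonneg' _ hb)) (by positivity)]
        _ = δ'⁻¹ * ENNReal.ofReal (ℓ (φ (s, z))) + H z := by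
            rw [hℓ _ hb, ENNReal.ofReal_mul (by positivity), ENNReal.ofReal_inv_of_pos hδ]
    calc ∫⁻ s in Icc (0:ℝ) T, ∫⁻ z, ENNReal.ofReal (g z ^ 2 * (φ (s, z) + 1)) ∂ν
        ≤ ∫⁻ s in Icc (0:ℝ) T, ∫⁻ z, (δ'⁻¹ * ENNReal.ofReal (ℓ (φ (s, z))) + H z) ∂ν :=
          lintegral_mono fun s => lintegral_mono fun z => key s z
      _ = ∫⁻ s in Icc (0:ℝ) T,
            (δ'⁻¹ * ∫⁻ z, ENNReal.ofReal (ℓ (φ (s, z))) ∂ν + ∫⁻ z, H z ∂ν) := by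
          refine lintegral_congr fun s => ?_
          rw [lintegral_add_right _ Hmeas, lintegral_const_mul' _ _ hδ't]
      _ = δ'⁻¹ * (∫⁻ s in Icc (0:ℝ) T, ∫⁻ z, ENNReal.ofReal (ℓ (φ (s, z))) ∂ν) +
            (∫⁻ z, H z ∂ν) * volume (Icc (0:ℝ) T) := by
          rw [lintegral_add_right _ measurable_const, lintegral_const_mul' _ _ hδ't,
            setLIntegral_const]
      _ ≤ δ'⁻¹ * ENNReal.ofReal N + (∫⁻ z, H z ∂ν) * volume (Icc (0:ℝ) T) :=
          add_le_add_left (mul_le_mul_right hφN _) _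
  · apply ENNReal.add_lt_top.mpr
    constructor
    · exact ENNReal.mul_lt_top hδ't.lt_top ENNReal.ofReal_lt_top
    · rw [Real.volume_Icc]
      exact ENNReal.mul_lt_top HT ENNReal.ofReal_lt_top
end

section
/- For every N > 0, the quantity sup over φ in S^N of ∫₀^T ∫_Z |g(z)| · |φ(s,z) − 1| ν(dz) ds is finite. -/
open MeasureTheory Set

private lemma myA (x : ℝ) (hx : 0 ≤ x) :
    (Real.sqrt x - 1) ^ 2 ≤ x * Real.log x - x + 1 := by
  rcases hx.eq_or_lt with h | hx'
  · simp [← h]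
  · set s := Real.sqrt x with hs
    have hs0 : 0 < s := Real.sqrt_pos.mpr hx'
    have hs2 : s ^ 2 = x := Real.sq_sqrt hx
    have hlog : Real.log x = 2 * Real.log s := by
      rw [← hs2, Real.log_pow]; push_cast; ring
    have h1 : Real.log s⁻¹ ≤ s⁻¹ - 1 := Real.log_le_sub_one_of_pos (inv_pos.mpr hs0)
    rw [Real.log_inv] at h1
    have h2 : 1 - s⁻¹ ≤ Real.log s := by linarith
    have h5 : 2 * s ^ 2 * (1 - s⁻¹) ≤ 2 * s ^ 2 * Real.log s :=
      mul_le_mul_of_nonneg_left h2 (by positivity)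
    have h6 : 2 * s ^ 2 * (1 - s⁻¹) = 2 * s ^ 2 - 2 * s := by
      field_simp
    rw [hlog, ← hs2]
    nlinarith [h5, h6]

private lemma myB (a b : ℝ) (ha : 0 ≤ a) (hb : 0 ≤ b) :
    a * b ≤ (b * Real.log b - b + 1) + Real.exp a := by
  rcases hb.eq_or_lt with h | hb'
  · rw [← h]; simp; positivity
  · have h1 : (a - Real.log b) + 1 ≤ Real.exp (a - Real.log b) := Real.add_one_le_exp _
    have h2 : b * ((a - Real.log b) + 1) ≤ b * Real.exp (a - Real.log b) :=
      mul_le_mul_of_nonneg_left h1 hb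
    have h3 : b * Real.exp (a - Real.log b) = Real.exp a := by
      rw [Real.exp_sub, Real.exp_log hb']; field_simp
    nlinarith [h2, h3]

private lemma myC (x : ℝ) (hx : 4 ≤ x) : x ≤ 3 * (x * Real.log x - x + 1) := by
  have hx0 : (0:ℝ) < x := by linarith
  have h4 : Real.log 4 ≤ Real.log x := Real.log_le_log (by norm_num) hx
  have hl4 : Real.log 4 = 2 * Real.log 2 := by
    rw [show (4:ℝ) = 2 ^ 2 by norm_num, Real.log_pow]; push_cast; ring
  have hl2 := Real.log_two_gt_d9
  have h5 : x * Real.log 4 ≤ x * Real.log x := mul_le_mul_of_nonneg_left h4 (by linarith)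
  nlinarith

private lemma myD (a x : ℝ) (ha : 0 ≤ a) (hx : 0 ≤ x) :
    a * |x - 1| ≤ (if a ≤ 1 then a ^ 2 else Real.exp a + a ^ 2)
      + 3 * (x * Real.log x - x + 1) := by
  have hL0 : 0 ≤ x * Real.log x - x + 1 := le_trans (sq_nonneg _) (myA x hx)
  split_ifs with h1
  · rcases le_or_gt x 4 with hx4 | hx4
    · have hA := myA x hx
      set s := Real.sqrt x with hs
      have hs0 : 0 ≤ s := Real.sqrt_nonneg x
      have hs2 : s ^ 2 = x := Real.sq_sqrt hx
      have hsle : s ≤ 2 := by nlinarith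
      have habs : |x - 1| ≤ 3 * |s - 1| := by
        have hfac : x - 1 = (s - 1) * (s + 1) := by rw [← hs2]; ring
        rw [hfac, abs_mul, abs_of_nonneg (by linarith : (0:ℝ) ≤ s + 1)]
        calc |s - 1| * (s + 1) ≤ |s - 1| * 3 :=
              mul_le_mul_of_nonneg_left (by linarith) (abs_nonneg _)
          _ = 3 * |s - 1| := mul_comm _ _
      have hsq : |s - 1| ^ 2 ≤ x * Real.log x - x + 1 := by rw [sq_abs]; exact hA
      nlinarith [sq_nonneg (a - (3/2) * |s - 1|), abs_nonneg (x - 1), abs_nonneg (s - 1),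
        mul_le_mul_of_nonneg_left habs ha, hsq, hL0]
    · have hC := myC x (le_of_lt hx4)
      have habs : |x - 1| = x - 1 := abs_of_nonneg (by linarith)
      have h2 : a * |x - 1| ≤ 1 * |x - 1| := mul_le_mul_of_nonneg_right h1 (abs_nonneg _)
      nlinarith [sq_nonneg a]
  · have hB := myB a x ha hx
    have haa : a ≤ a ^ 2 := by nlinarith
    have habs : |x - 1| ≤ x + 1 := abs_le.mpr ⟨by linarith, by linarith⟩
    have h2 : a * |x - 1| ≤ a * (x + 1) := mul_le_mul_of_nonneg_left habs ha
    nlinarith [h2, hB, hL0, haa]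

/-- For every `N > 0`, the supremum over `φ ∈ S^N` of
`∫₀^T ∫_Z |g(z)| |φ(s,z) − 1| ν(dz) ds` is finite. -/
theorem stmt1
    {Z : Type*} [TopologicalSpace Z] [PolishSpace Z] [LocallyCompactSpace Z]
    [MeasurableSpace Z] [BorelSpace Z]
    (ν : Measure Z) [IsFiniteMeasureOnCompacts ν] [SigmaFinite ν]
    (T : ℝ) (hT : 0 < T)
    (ℓ : ℝ → ℝ) (hℓ : ∀ r : ℝ, 0 ≤ r → ℓ r = r * Real.log r - r + 1)
    (g : Z → ℝ) (hgmeas : Measurable g)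
    (hgL2 : ∫⁻ z, ENNReal.ofReal (g z ^ 2) ∂ν < ⊤)
    (hgexp : ∃ δ : ℝ, 0 < δ ∧ ∀ E : Set Z, MeasurableSet E → ν E < ⊤ →
        ∫⁻ z in E, ENNReal.ofReal (Real.exp (δ * g z ^ 2)) ∂ν < ⊤)
    (N : ℝ) (hN : 0 < N) :
    (⨆ φ ∈ {φ : ℝ × Z → ℝ | Measurable φ ∧ (∀ p, 0 ≤ φ p) ∧
        ∫⁻ s in Icc (0 : ℝ) T, ∫⁻ z, ENNReal.ofReal (ℓ (φ (s, z))) ∂ν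
          ≤ ENNReal.ofReal N},
      ∫⁻ s in Icc (0 : ℝ) T, ∫⁻ z, ENNReal.ofReal (|g z| * |φ (s, z) - 1|) ∂ν) < ⊤ := by
  obtain ⟨δ, hδpos, hEint⟩ := hgexp
  set E : Set Z := {z | 1 < |g z|} with hEdef
  have hEmeas : MeasurableSet E := measurableSet_lt measurable_const hgmeas.abs
  have hg2meas : Measurable fun z => ENNReal.ofReal (g z ^ 2) :=
    ENNReal.measurable_ofReal.comp (hgmeas.pow_const 2)
  have hνE : ν E < ⊤ := by
    have h1 : ν E = ∫⁻ z in E, 1 ∂ν := (setLIntegral_one E).symm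
    have h2 : ∫⁻ z in E, 1 ∂ν ≤ ∫⁻ z in E, ENNReal.ofReal (g z ^ 2) ∂ν := by
      refine setLIntegral_mono hg2meas fun z hz => ?_
      have hz' : 1 < |g z| := hz
      have : (1:ℝ) ≤ g z ^ 2 := by nlinarith [sq_abs (g z)]
      simpa using ENNReal.one_le_ofReal.mpr this
    have h3 : ∫⁻ z in E, ENNReal.ofReal (g z ^ 2) ∂ν ≤ ∫⁻ z, ENNReal.ofReal (g z ^ 2) ∂ν :=
      setLIntegral_le_lintegral _ _
    exact lt_of_le_of_lt (h1 ▸ h2.trans h3) hgL2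
  have hexppt : ∀ z, Real.exp |g z| ≤ Real.exp (1/(4*δ)) * Real.exp (δ * g z ^ 2) := by
    intro z
    rw [← Real.exp_add]
    apply Real.exp_le_exp.mpr
    have h2 : δ * |g z| ≤ δ ^ 2 * g z ^ 2 + 1/4 := by
      nlinarith [sq_nonneg (2 * δ * |g z| - 1), sq_abs (g z)]
    have h3 : |g z| ≤ (δ ^ 2 * g z ^ 2 + 1/4) / δ :=
      (le_div_iff₀ hδpos).mpr (by linarith)
    have h4 : (δ ^ 2 * g z ^ 2 + 1/4) / δ = δ * g z ^ 2 + 1/(4*δ) := by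
      field_simp
    linarith [h3, h4.le, h4.ge]
  have hexpE : ∫⁻ z in E, ENNReal.ofReal (Real.exp |g z|) ∂ν < ⊤ := by
    have h1 : ∫⁻ z in E, ENNReal.ofReal (Real.exp |g z|) ∂ν
        ≤ ∫⁻ z in E, ENNReal.ofReal (Real.exp (1/(4*δ)) * Real.exp (δ * g z ^ 2)) ∂ν :=
      lintegral_mono fun z => ENNReal.ofReal_le_ofReal (hexppt z)
    have h2 : ∫⁻ z in E, ENNReal.ofReal (Real.exp (1/(4*δ)) * Real.exp (δ * g z ^ 2)) ∂ν
        = ENNReal.ofReal (Real.exp (1/(4*δ)))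
          * ∫⁻ z in E, ENNReal.ofReal (Real.exp (δ * g z ^ 2)) ∂ν := by
      simp_rw [ENNReal.ofReal_mul (Real.exp_nonneg _)]
      exact lintegral_const_mul' _ _ ENNReal.ofReal_ne_top
    refine lt_of_le_of_lt (h1.trans h2.le) ?_
    exact ENNReal.mul_lt_top ENNReal.ofReal_lt_top (hEint E hEmeas hνE)
  set B : Z → ENNReal := fun z =>
    ENNReal.ofReal (g z ^ 2) + E.indicator (fun z => ENNReal.ofReal (Real.exp |g z|)) z
    with hBdef
  have hBmeas : Measurable B :=
    hg2meas.add ((ENNReal.measurable_ofReal.comp (Real.measurable_exp.comp hgmeas.abs)).indicator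
      hEmeas)
  have hBint : ∫⁻ z, B z ∂ν < ⊤ := by
    rw [hBdef]
    rw [lintegral_add_left hg2meas, lintegral_indicator hEmeas _]
    exact ENNReal.add_lt_top.mpr ⟨hgL2, hexpE⟩
  have hkey : ∀ z, ∀ x : ℝ, 0 ≤ x →
      ENNReal.ofReal (|g z| * |x - 1|)
        ≤ B z + 3 * ENNReal.ofReal (x * Real.log x - x + 1) := by
    intro z x hx
    have hL0 : 0 ≤ x * Real.log x - x + 1 := le_trans (sq_nonneg _) (myA x hx)
    have hmaster := myD (|g z|) x (abs_nonneg _) hx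
    have h3eq : ENNReal.ofReal (3 * (x * Real.log x - x + 1))
        = 3 * ENNReal.ofReal (x * Real.log x - x + 1) := by
      rw [ENNReal.ofReal_mul (by norm_num)]
      norm_num
    by_cases h1 : |g z| ≤ 1
    · rw [if_pos h1, sq_abs] at hmaster
      calc ENNReal.ofReal (|g z| * |x - 1|)
          ≤ ENNReal.ofReal (g z ^ 2 + 3 * (x * Real.log x - x + 1)) :=
            ENNReal.ofReal_le_ofReal hmaster
        _ = ENNReal.ofReal (g z ^ 2) + ENNReal.ofReal (3 * (x * Real.log x - x + 1)) :=
            ENNReal.ofReal_add (sq_nonneg _) (by positivity)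
        _ ≤ B z + 3 * ENNReal.ofReal (x * Real.log x - x + 1) := by
            rw [h3eq]
            exact add_le_add_left le_self_add _
    · rw [if_neg h1, sq_abs] at hmaster
      have hzE : z ∈ E := by simpa [hEdef] using not_le.mp h1
      have hBz : B z = ENNReal.ofReal (g z ^ 2) + ENNReal.ofReal (Real.exp |g z|) := by
        rw [hBdef]; simp [Set.indicator_of_mem hzE]
      calc ENNReal.ofReal (|g z| * |x - 1|)
          ≤ ENNReal.ofReal ((Real.exp |g z| + g z ^ 2) + 3 * (x * Real.log x - x + 1)) :=
            ENNReal.ofReal_le_ofReal hmaster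
        _ = (ENNReal.ofReal (g z ^ 2) + ENNReal.ofReal (Real.exp |g z|))
            + ENNReal.ofReal (3 * (x * Real.log x - x + 1)) := by
            rw [ENNReal.ofReal_add (by positivity) (by positivity),
              ENNReal.ofReal_add (Real.exp_nonneg _) (sq_nonneg _), add_comm
                (ENNReal.ofReal (Real.exp |g z|)) _]
        _ = B z + 3 * ENNReal.ofReal (x * Real.log x - x + 1) := by rw [hBz, h3eq]
  have hvol : volume (Icc (0:ℝ) T) < ⊤ := by
    rw [Real.volume_Icc]; exact ENNReal.ofReal_lt_top
  have hC : (∫⁻ z, B z ∂ν) * volume (Icc (0:ℝ) T) + 3 * ENNReal.ofReal N < ⊤ := by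
    exact ENNReal.add_lt_top.mpr ⟨ENNReal.mul_lt_top hBint hvol,
      ENNReal.mul_lt_top (by norm_num) ENNReal.ofReal_lt_top⟩
  refine lt_of_le_of_lt (iSup₂_le fun φ hφ => ?_) hC
  obtain ⟨hφm, hφ0, hφN⟩ := hφ
  calc ∫⁻ s in Icc (0:ℝ) T, ∫⁻ z, ENNReal.ofReal (|g z| * |φ (s, z) - 1|) ∂ν
      ≤ ∫⁻ s in Icc (0:ℝ) T, ∫⁻ z,
          (B z + 3 * ENNReal.ofReal (ℓ (φ (s, z)))) ∂ν := by
        refine lintegral_mono fun s => lintegral_mono fun z => ?_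
        rw [hℓ _ (hφ0 (s, z))]
        exact hkey z _ (hφ0 (s, z))
    _ = ∫⁻ s in Icc (0:ℝ) T,
          ((∫⁻ z, B z ∂ν) + 3 * ∫⁻ z, ENNReal.ofReal (ℓ (φ (s, z))) ∂ν) := by
        refine lintegral_congr fun s => ?_
        rw [lintegral_add_left hBmeas, lintegral_const_mul' _ _ (by norm_num)]
    _ = (∫⁻ z, B z ∂ν) * volume (Icc (0:ℝ) T)
          + 3 * ∫⁻ s in Icc (0:ℝ) T, ∫⁻ z, ENNReal.ofReal (ℓ (φ (s, z))) ∂ν := by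
        rw [lintegral_add_left measurable_const, lintegral_const,
          Measure.restrict_apply_univ, lintegral_const_mul' _ _ (by norm_num)]
    _ ≤ (∫⁻ z, B z ∂ν) * volume (Icc (0:ℝ) T) + 3 * ENNReal.ofReal N := by
        exact add_le_add_right (mul_le_mul_right hφN 3) _
end

section
/- For every N > 0 and every η > 0 there exists δ₀ > 0 such that for every Lebesgue-measurable set A ⊆ [0,T] with Lebesgue measure λ(A) < δ₀ one has sup over φ in S^N of ∫_A ∫_Z |g(z)| · |φ(s,z) − 1| ν(dz) ds ≤ η. -/
open MeasureTheory Set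

/-- Young's inequality for the entropy function. -/
lemma young_entropy {b : ℝ} (hb : 0 ≤ b) (x : ℝ) :
    b * x ≤ Real.exp x + b * Real.log b - b := by
  rcases eq_or_lt_of_le hb with h | h
  · simp [← h, (Real.exp_pos x).le]
  · have h1 : (x - Real.log b) + 1 ≤ Real.exp (x - Real.log b) := Real.add_one_le_exp _
    have h2 : b * ((x - Real.log b) + 1) ≤ b * Real.exp (x - Real.log b) :=
      mul_le_mul_of_nonneg_left h1 h.le
    have h3 : b * Real.exp (x - Real.log b) = Real.exp x := by
      rw [Real.exp_sub, Real.exp_log h]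
      field_simp
    nlinarith [h2, h3]

/-- `e^c - e^{-c} ≥ 2c` for `c ≥ 0`. -/
lemma exp_sub_exp_neg {c : ℝ} (hc : 0 ≤ c) : 2 * c ≤ Real.exp c - Real.exp (-c) := by
  have := (Real.self_le_sinh_iff).mpr hc
  rw [Real.sinh_eq] at this
  linarith

/-- Key convex-duality inequality. -/
lemma key_ineq {b c : ℝ} (hb : 0 ≤ b) (hc : 0 ≤ c) :
    c * |b - 1| ≤ (b * Real.log b - b + 1) + (Real.exp c - c - 1) := by
  rcases le_total b 1 with h | h
  · rw [abs_of_nonpos (by linarith)]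
    have hy := young_entropy hb (-c)
    have h2 := exp_sub_exp_neg hc
    nlinarith
  · rw [abs_of_nonneg (by linarith)]
    have hy := young_entropy hb c
    nlinarith

/-- `e^c - c - 1 ≤ c² e^c` for `c ≥ 0`. -/
lemma exp_sub_le {c : ℝ} (hc : 0 ≤ c) : Real.exp c - c - 1 ≤ c ^ 2 * Real.exp c := by
  have h1 : 1 - c ≤ Real.exp (-c) := by linarith [Real.add_one_le_exp (-c)]
  have h2 : Real.exp (-c) * Real.exp c = 1 := by rw [← Real.exp_add]; simp
  have hpos := Real.exp_pos c
  have h3 : Real.exp c - 1 ≤ c * Real.exp c := by nlinarith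
  nlinarith

lemma exp_sub_nonneg (c : ℝ) : 0 ≤ Real.exp c - c - 1 := by
  linarith [Real.add_one_le_exp c]

/-- For every `N > 0` and `η > 0` there is `δ₀ > 0` such that for every measurable
`A ⊆ [0,T]` with Lebesgue measure `< δ₀`, the supremum over `φ ∈ S^N` of
`∫_A ∫_Z |g(z)| |φ(s,z) − 1| ν(dz) ds` is at most `η`. -/
theorem stmt2
    {Z : Type*} [TopologicalSpace Z] [PolishSpace Z] [LocallyCompactSpace Z]
    [MeasurableSpace Z] [BorelSpace Z]
    (ν : Measure Z) [IsFiniteMeasureOnCompacts ν] [SigmaFinite ν]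
    (T : ℝ) (hT : 0 < T)
    (ℓ : ℝ → ℝ) (hℓ : ∀ r : ℝ, 0 ≤ r → ℓ r = r * Real.log r - r + 1)
    (g : Z → ℝ) (hgmeas : Measurable g)
    (hgL2 : ∫⁻ z, ENNReal.ofReal (g z ^ 2) ∂ν < ⊤)
    (hgexp : ∃ δ : ℝ, 0 < δ ∧ ∀ E : Set Z, MeasurableSet E → ν E < ⊤ →
        ∫⁻ z in E, ENNReal.ofReal (Real.exp (δ * g z ^ 2)) ∂ν < ⊤)
    (N : ℝ) (hN : 0 < N) (η : ℝ) (hη : 0 < η) :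
    ∃ δ₀ : ℝ, 0 < δ₀ ∧ ∀ A : Set ℝ, MeasurableSet A → A ⊆ Icc (0 : ℝ) T →
      volume A < ENNReal.ofReal δ₀ →
      (⨆ φ ∈ {φ : ℝ × Z → ℝ | Measurable φ ∧ (∀ p, 0 ≤ φ p) ∧
          ∫⁻ s in Icc (0 : ℝ) T, ∫⁻ z, ENNReal.ofReal (ℓ (φ (s, z))) ∂ν
            ≤ ENNReal.ofReal N},
        ∫⁻ s in A, ∫⁻ z, ENNReal.ofReal (|g z| * |φ (s, z) - 1|) ∂ν)
        ≤ ENNReal.ofReal η := by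
  obtain ⟨δ, hδ, hδint⟩ := hgexp
  set σ : ℝ := 2 * N / η with hσdef
  have hσ : 0 < σ := by positivity
  set β : ℝ := max 1 (σ / δ) with hβdef
  have hβ1 : (1:ℝ) ≤ β := le_max_left _ _
  have hβ2 : σ / δ ≤ β := le_max_right _ _
  set h : Z → ℝ := fun z => Real.exp (σ * |g z|) - σ * |g z| - 1 with hhdef
  have hh0 : ∀ z, 0 ≤ h z := fun z => exp_sub_nonneg _
  have hhmeas : Measurable fun z => ENNReal.ofReal (h z) :=
    (((Real.measurable_exp.comp (measurable_const.mul hgmeas.abs)).sub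
      (measurable_const.mul hgmeas.abs)).sub measurable_const).ennreal_ofReal
  set E : Set Z := {z | β < |g z|} with hEdef
  have hEmeas : MeasurableSet E := measurableSet_lt measurable_const hgmeas.abs
  have hg2meas : Measurable fun z => ENNReal.ofReal (g z ^ 2) :=
    (hgmeas.pow_const 2).ennreal_ofReal
  have hEfin : ν E < ⊤ := by
    have hE1 : ν E = ∫⁻ _ in E, 1 ∂ν := (setLIntegral_one E).symm
    rw [hE1]
    refine lt_of_le_of_lt
      (le_trans (setLIntegral_mono hg2meas ?_) (setLIntegral_le_lintegral E _)) hgL2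
    intro z hz
    have h1 : β < |g z| := hz
    have h2 : (1:ℝ) ≤ g z ^ 2 := by nlinarith [sq_abs (g z)]
    simpa using ENNReal.one_le_ofReal.mpr h2
  set H : ENNReal := ∫⁻ z, ENNReal.ofReal (h z) ∂ν with hHdef
  have hHfin : H < ⊤ := by
    rw [hHdef, ← lintegral_add_compl (fun z => ENNReal.ofReal (h z)) hEmeas]
    refine ENNReal.add_lt_top.mpr ⟨?_, ?_⟩
    · refine lt_of_le_of_lt (setLIntegral_mono
        ((Real.measurable_exp.comp (measurable_const.mul (hgmeas.pow_const 2))).ennreal_ofReal)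
        ?_) (hδint E hEmeas hEfin)
      intro z hz
      apply ENNReal.ofReal_le_ofReal
      have hz' : β < |g z| := hz
      have h1 : σ * |g z| ≤ δ * g z ^ 2 := by
        have h2 : σ / δ < |g z| := lt_of_le_of_lt hβ2 hz'
        have h3 : σ < δ * |g z| := by
          rw [div_lt_iff₀ hδ] at h2; linarith
        nlinarith [abs_nonneg (g z), sq_abs (g z)]
      have h4 : h z ≤ Real.exp (σ * |g z|) := by
        have := mul_nonneg hσ.le (abs_nonneg (g z)); simp only [hhdef]; linarith
      exact le_trans h4 (Real.exp_le_exp.mpr h1)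
    · have hpt : ∀ z ∈ Eᶜ, ENNReal.ofReal (h z) ≤
          ENNReal.ofReal (σ ^ 2 * Real.exp (σ * β)) * ENNReal.ofReal (g z ^ 2) := by
        intro z hz
        have hz' : |g z| ≤ β := by
          simp only [hEdef, mem_compl_iff, mem_setOf_eq, not_lt] at hz; exact hz
        rw [← ENNReal.ofReal_mul (by positivity)]
        apply ENNReal.ofReal_le_ofReal
        have hc : 0 ≤ σ * |g z| := mul_nonneg hσ.le (abs_nonneg (g z))
        have h1 := exp_sub_le hc
        have h2 : Real.exp (σ * |g z|) ≤ Real.exp (σ * β) :=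
          Real.exp_le_exp.mpr (mul_le_mul_of_nonneg_left hz' hσ.le)
        have h3 : (σ * |g z|) ^ 2 = σ ^ 2 * g z ^ 2 := by
          rw [mul_pow, sq_abs]
        have h4 : (σ * |g z|) ^ 2 * Real.exp (σ * |g z|) ≤ σ ^ 2 * g z ^ 2 * Real.exp (σ * β) := by
          rw [h3]; exact mul_le_mul_of_nonneg_left h2 (by positivity)
        simp only [hhdef]
        nlinarith [h1, h4]
      refine lt_of_le_of_lt (setLIntegral_mono (measurable_const.mul hg2meas) hpt) ?_
      refine lt_of_le_of_lt (setLIntegral_le_lintegral _ _) ?_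
      simp only [Pi.mul_apply]
      rw [lintegral_const_mul' _ _ ENNReal.ofReal_ne_top]
      exact ENNReal.mul_lt_top ENNReal.ofReal_lt_top hgL2
  have htR : 0 ≤ H.toReal := ENNReal.toReal_nonneg
  set δ₀ : ℝ := σ * η / (2 * (H.toReal + 1)) with hδ₀def
  have hδ₀pos : 0 < δ₀ := by positivity
  refine ⟨δ₀, hδ₀pos, fun A hAmeas hAsub hAvol => ?_⟩
  apply iSup₂_le
  intro φ hφ
  obtain ⟨hφm, hφ0, hφN⟩ := hφ
  set ℓ' : ℝ → ℝ := fun r => r * Real.log r - r + 1 with hℓ'def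
  have hφN' : ∫⁻ s in Icc (0:ℝ) T, ∫⁻ z, ENNReal.ofReal (ℓ' (φ (s, z))) ∂ν
      ≤ ENNReal.ofReal N := by
    refine le_trans (le_of_eq ?_) hφN
    exact lintegral_congr fun s => lintegral_congr fun z => by
      rw [hℓ _ (hφ0 (s, z))]
  have hℓ'meas : ∀ s : ℝ, Measurable fun z => ENNReal.ofReal (ℓ' (φ (s, z))) := by
    intro s
    have hm : Measurable fun z => φ (s, z) := hφm.comp measurable_prodMk_left
    exact (((hm.mul (Real.measurable_log.comp hm)).sub hm).add measurable_const).ennreal_ofReal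
  have key2 : ∀ s z, ENNReal.ofReal σ * ENNReal.ofReal (|g z| * |φ (s, z) - 1|) ≤
      ENNReal.ofReal (ℓ' (φ (s, z))) + ENNReal.ofReal (h z) := by
    intro s z
    rw [← ENNReal.ofReal_mul hσ.le]
    refine le_trans (ENNReal.ofReal_le_ofReal ?_) ENNReal.ofReal_add_le
    have hk := key_ineq (hφ0 (s, z)) (mul_nonneg hσ.le (abs_nonneg (g z)))
    calc σ * (|g z| * |φ (s, z) - 1|) = (σ * |g z|) * |φ (s, z) - 1| := by ring
      _ ≤ (φ (s, z) * Real.log (φ (s, z)) - φ (s, z) + 1)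
          + (Real.exp (σ * |g z|) - σ * |g z| - 1) := hk
      _ = ℓ' (φ (s, z)) + h z := rfl
  have main : ENNReal.ofReal σ *
      (∫⁻ s in A, ∫⁻ z, ENNReal.ofReal (|g z| * |φ (s, z) - 1|) ∂ν) ≤
      ENNReal.ofReal N + ENNReal.ofReal δ₀ * ENNReal.ofReal (H.toReal + 1) := by
    calc ENNReal.ofReal σ * (∫⁻ s in A, ∫⁻ z, ENNReal.ofReal (|g z| * |φ (s, z) - 1|) ∂ν)
        = ∫⁻ s in A, ENNReal.ofReal σ * ∫⁻ z, ENNReal.ofReal (|g z| * |φ (s, z) - 1|) ∂ν :=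
          (lintegral_const_mul' _ _ ENNReal.ofReal_ne_top).symm
      _ = ∫⁻ s in A, ∫⁻ z, ENNReal.ofReal σ * ENNReal.ofReal (|g z| * |φ (s, z) - 1|) ∂ν :=
          lintegral_congr fun s => (lintegral_const_mul' _ _ ENNReal.ofReal_ne_top).symm
      _ ≤ ∫⁻ s in A, ∫⁻ z, (ENNReal.ofReal (ℓ' (φ (s, z))) + ENNReal.ofReal (h z)) ∂ν :=
          lintegral_mono fun s => lintegral_mono fun z => key2 s z
      _ = ∫⁻ s in A, ((∫⁻ z, ENNReal.ofReal (ℓ' (φ (s, z))) ∂ν) + H) :=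
          lintegral_congr fun s => lintegral_add_right _ hhmeas
      _ = (∫⁻ s in A, ∫⁻ z, ENNReal.ofReal (ℓ' (φ (s, z))) ∂ν) + H * volume A := by
          rw [lintegral_add_right _ measurable_const, setLIntegral_const]
      _ ≤ ENNReal.ofReal N + ENNReal.ofReal δ₀ * ENNReal.ofReal (H.toReal + 1) := by
          refine add_le_add (le_trans (lintegral_mono_set hAsub) hφN') ?_
          rw [mul_comm]
          refine mul_le_mul' hAvol.le ?_
          exact le_trans (le_of_eq (ENNReal.ofReal_toReal hHfin.ne).symm)
            (ENNReal.ofReal_le_ofReal (by linarith))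
  have hfinal : ENNReal.ofReal N + ENNReal.ofReal δ₀ * ENNReal.ofReal (H.toReal + 1) ≤
      ENNReal.ofReal σ * ENNReal.ofReal η := by
    rw [← ENNReal.ofReal_mul hδ₀pos.le, ← ENNReal.ofReal_mul hσ.le,
      ← ENNReal.ofReal_add hN.le (by positivity)]
    apply ENNReal.ofReal_le_ofReal
    have h1 : δ₀ * (H.toReal + 1) = σ * η / 2 := by
      rw [hδ₀def]; field_simp
    have h2 : N = σ * η / 2 := by
      rw [hσdef]; field_simp
    linarith
  exact (ENNReal.mul_le_mul_iff_right (ENNReal.ofReal_pos.mpr hσ).ne' ENNReal.ofReal_ne_top).mp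
    (le_trans main hfinal)
end

section
/- Let σ > 2 be a real number and let β ∈ ℝ satisfy σ·|β| < √(2σ+1). Then for all complex numbers a and b, Re[(1 − iβ)(|a|^{2σ} a − |b|^{2σ} b) · conj(a − b)] ≥ (1 − σ|β|/√(2σ+1)) · 2^{−2σ} · |a − b|^{2σ+2}. -/
open Real

lemma L1 {c d y : ℝ} (hd : 0 ≤ d) (hdc : d ≤ c) (hy : 0 ≤ y) :
    c * Real.sinh (d*y) ≤ d * Real.sinh (c*y) := by
  have hc : 0 ≤ c := hd.trans hdc
  have hmono : MonotoneOn (fun z => d * Real.sinh (c*z) - c * Real.sinh (d*z)) (Set.Ici (0:ℝ)) := by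
    apply monotoneOn_of_deriv_nonneg (convex_Ici 0)
    · fun_prop
    · fun_prop
    · intro z hz
      rw [interior_Ici, Set.mem_Ioi] at hz
      have h1 : HasDerivAt (fun z => d * Real.sinh (c*z) - c * Real.sinh (d*z))
          (d * c * (Real.cosh (c*z) - Real.cosh (d*z))) z := by
        have := (((Real.hasDerivAt_sinh (c*z)).comp z ((hasDerivAt_id z).const_mul c)).const_mul d).sub
          (((Real.hasDerivAt_sinh (d*z)).comp z ((hasDerivAt_id z).const_mul d)).const_mul c)
        refine this.congr_deriv ?_
        ring
      rw [h1.deriv]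
      have hcc : Real.cosh (d*z) ≤ Real.cosh (c*z) := by
        rw [Real.cosh_le_cosh, abs_of_nonneg (mul_nonneg hd hz.le),
          abs_of_nonneg (mul_nonneg hc hz.le)]
        exact mul_le_mul_of_nonneg_right hdc hz.le
      have := mul_nonneg (mul_nonneg hd hc) (sub_nonneg.2 hcc)
      linarith
  have := hmono Set.self_mem_Ici hy hy
  simp at this
  linarith

lemma L2 {m : ℝ} (hm : 0 ≤ m) (y : ℝ) :
    (m+2)^2 * Real.cosh (m*y) ≤ m^2 * Real.cosh ((m+2)*y) + 4*(m+1) := by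
  wlog hy : 0 ≤ y with H
  · have h := H hm (-y) (by linarith [le_of_not_ge hy])
    rw [mul_neg, Real.cosh_neg, mul_neg, Real.cosh_neg] at h
    exact h
  have hmono : MonotoneOn (fun z => m^2 * Real.cosh ((m+2)*z) + 4*(m+1)
      - (m+2)^2 * Real.cosh (m*z)) (Set.Ici (0:ℝ)) := by
    apply monotoneOn_of_deriv_nonneg (convex_Ici 0)
    · fun_prop
    · fun_prop
    · intro z hz
      rw [interior_Ici, Set.mem_Ioi] at hz
      have h1 : HasDerivAt (fun z => m^2 * Real.cosh ((m+2)*z) + 4*(m+1)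
          - (m+2)^2 * Real.cosh (m*z))
          (m*(m+2) * (m * Real.sinh ((m+2)*z) - (m+2) * Real.sinh (m*z))) z := by
        have := ((((Real.hasDerivAt_cosh ((m+2)*z)).comp z
            ((hasDerivAt_id z).const_mul (m+2))).const_mul (m^2)).add_const (4*(m+1))).sub
          (((Real.hasDerivAt_cosh (m*z)).comp z ((hasDerivAt_id z).const_mul m)).const_mul ((m+2)^2))
        refine this.congr_deriv ?_
        ring
      rw [h1.deriv]
      have := L1 hm (by linarith : m ≤ m+2) hz.le
      have hm2 : (0:ℝ) ≤ m*(m+2) := by nlinarith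
      nlinarith
  have := hmono Set.self_mem_Ici hy hy
  simp at this
  linarith

lemma L3 {m x : ℝ} (hm : 0 ≤ m) :
    4*(m+1) * Real.sinh (m*x)^2 ≤ m^2 * (Real.sinh (2*x) * Real.sinh ((2*m+2)*x)) := by
  have e1 : Real.cosh ((m+2)*(2*x))
      = Real.cosh (2*x) * Real.cosh ((2*m+2)*x) + Real.sinh (2*x) * Real.sinh ((2*m+2)*x) := by
    rw [show (m+2)*(2*x) = 2*x + (2*m+2)*x by ring, Real.cosh_add]
  have e2 : Real.cosh (m*(2*x))
      = Real.cosh ((2*m+2)*x) * Real.cosh (2*x) - Real.sinh ((2*m+2)*x) * Real.sinh (2*x) := by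
    rw [show m*(2*x) = (2*m+2)*x - 2*x by ring, Real.cosh_sub]
  have e3 : Real.cosh (m*(2*x)) = 2 * Real.sinh (m*x)^2 + 1 := by
    rw [show m*(2*x) = 2*(m*x) by ring, Real.cosh_two_mul, Real.cosh_sq]
    ring
  have h := L2 hm (2*x)
  nlinarith [h, e1, e2, e3]

lemma L4 {m r s : ℝ} (hm : 1 ≤ m) (hs : 0 ≤ s) (hsr : s ≤ r) :
    4*(m+1) * ((r*s)^2 * (r^m - s^m)^2)
      ≤ m^2 * ((r^2 - s^2) * (r^(2*m+2) - s^(2*m+2))) := by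
  have hm0 : (0:ℝ) ≤ m := by linarith
  have hr : 0 ≤ r := hs.trans hsr
  rcases eq_or_lt_of_le hs with hs0 | hs0
  · -- s = 0
    rw [← hs0]
    have h1 : (0:ℝ)^m = 0 := Real.zero_rpow (by linarith)
    have h2 : (0:ℝ)^(2*m+2) = 0 := Real.zero_rpow (by linarith)
    rw [h1, h2]
    have h3 : 0 ≤ r^(2*m+2) := Real.rpow_nonneg hr _
    nlinarith [mul_nonneg (sq_nonneg m) (mul_nonneg (sq_nonneg r) h3)]
  · -- 0 < s ≤ r
    have hr0 : 0 < r := hs0.trans_le hsr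
    set g : ℝ := (Real.log r + Real.log s)/2 with hg
    set x : ℝ := (Real.log r - Real.log s)/2 with hx
    have hx0 : 0 ≤ x := by
      have := Real.log_le_log hs0 hsr
      simp only [hx]; linarith
    have hrE : r = Real.exp (g + x) := by
      rw [show g + x = Real.log r by rw [hg, hx]; ring, Real.exp_log hr0]
    have hsE : s = Real.exp (g - x) := by
      rw [show g - x = Real.log s by rw [hg, hx]; ring, Real.exp_log hs0]
    have hpow : ∀ k : ℝ, r^k - s^k = Real.exp (k*g) * (2 * Real.sinh (k*x)) := by
      intro k
      have h : Real.exp (k*g) * (2 * ((Real.exp (k*x) - Real.exp (-(k*x)))/2))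
          = Real.exp (k*g + k*x) - Real.exp (k*g + -(k*x)) := by
        rw [Real.exp_add, Real.exp_add]; ring
      rw [hrE, hsE, ← Real.exp_mul, ← Real.exp_mul, Real.sinh_eq, h]
      ring_nf
    have hrs : r * s = Real.exp (2*g) := by
      rw [hrE, hsE, ← Real.exp_add]; ring_nf
    have h2 : r^2 - s^2 = Real.exp (2*g) * (2 * Real.sinh (2*x)) := by
      have := hpow 2
      rwa [Real.rpow_two, Real.rpow_two] at this
    have key := @L3 m x hm0
    rw [hpow m, hpow (2*m+2), hrs, h2]
    have e1 : Real.exp (2*g)^2 * (Real.exp (m*g))^2 = Real.exp ((2*m+4)*g) := by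
      rw [sq, sq, ← Real.exp_add, ← Real.exp_add, ← Real.exp_add]; ring_nf
    have e2 : Real.exp (2*g) * Real.exp ((2*m+2)*g) = Real.exp ((2*m+4)*g) := by
      rw [← Real.exp_add]; ring_nf
    have hL : 4*(m+1) * ((Real.exp (2*g))^2 * (Real.exp (m*g) * (2 * Real.sinh (m*x)))^2)
        = 4*Real.exp ((2*m+4)*g) * (4*(m+1) * Real.sinh (m*x)^2) := by
      rw [← e1]; ring
    have hR : m^2 * ((Real.exp (2*g) * (2 * Real.sinh (2*x))) * (Real.exp ((2*m+2)*g) * (2 * Real.sinh ((2*m+2)*x))))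
        = 4*Real.exp ((2*m+4)*g) * (m^2 * (Real.sinh (2*x) * Real.sinh ((2*m+2)*x))) := by
      rw [← e2]; ring
    rw [hL, hR]
    exact mul_le_mul_of_nonneg_left key (by positivity)

lemma L4' {m r s : ℝ} (hm : 1 ≤ m) (hr : 0 ≤ r) (hs : 0 ≤ s) :
    4*(m+1) * ((r*s)^2 * (r^m - s^m)^2)
      ≤ m^2 * ((r^2 - s^2) * (r^(2*m+2) - s^(2*m+2))) := by
  rcases le_total s r with h | h
  · exact L4 hm hs h
  · have h1 := L4 hm hr h
    have e1 : 4*(m+1) * ((s*r)^2 * (s^m - r^m)^2) = 4*(m+1) * ((r*s)^2 * (r^m - s^m)^2) := by ring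
    have e2 : m^2 * ((s^2 - r^2) * (s^(2*m+2) - r^(2*m+2)))
        = m^2 * ((r^2 - s^2) * (r^(2*m+2) - s^(2*m+2))) := by ring
    linarith [h1, e1.le, e2.le]

set_option maxHeartbeats 2000000 in
lemma L5 {m r s u v : ℝ} (hm : 1 ≤ m) (hr : 0 ≤ r) (hs : 0 ≤ s)
    (huv : u^2 + v^2 ≤ (r*s)^2) :
    Real.sqrt (m+1) * |(r^m - s^m) * v| ≤ (m/2) * (r^(m+2) + s^(m+2) - (r^m + s^m)*u) := by
  have hm0 : (0:ℝ) ≤ m := by linarith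
  have hPr : r^(m+2) = r^m * r^2 := by
    rw [Real.rpow_add' hr (by linarith : m+2 ≠ 0), Real.rpow_two]
  have hPs : s^(m+2) = s^m * s^2 := by
    rw [Real.rpow_add' hs (by linarith : m+2 ≠ 0), Real.rpow_two]
  have hQr : r^(2*m+2) = r^m * (r^m * r^2) := by
    rw [show 2*m+2 = m+(m+2) by ring, Real.rpow_add' hr (by linarith : m+(m+2) ≠ 0), hPr]
  have hQs : s^(2*m+2) = s^m * (s^m * s^2) := by
    rw [show 2*m+2 = m+(m+2) by ring, Real.rpow_add' hs (by linarith : m+(m+2) ≠ 0), hPs]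
  set P := r^m with hP
  set Q := s^m with hQ
  have hP0 : 0 ≤ P := Real.rpow_nonneg hr _
  have hQ0 : 0 ≤ Q := Real.rpow_nonneg hs _
  set A := Real.sqrt (m+1) * |P - Q| with hA
  set B := (m/2) * (P + Q) with hB
  set C := (m/2) * (P*r^2 + Q*s^2) with hC
  have hA0 : 0 ≤ A := mul_nonneg (Real.sqrt_nonneg _) (abs_nonneg _)
  have hB0 : 0 ≤ B := by positivity
  have hC0 : 0 ≤ C := by positivity
  have hA2 : A^2 = (m+1) * (P - Q)^2 := by
    rw [hA, mul_pow, sq_abs, Real.sq_sqrt (by linarith : (0:ℝ) ≤ m+1)]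
  -- key: (r*s)^2 * (A^2 + B^2) ≤ C^2
  have hL4 := L4' hm hr hs
  rw [hQr, hQs, ← hP, ← hQ] at hL4
  have key : (r*s)^2 * (A^2 + B^2) ≤ C^2 := by
    rw [hA2, hB, hC]
    have expand : ((m/2) * (P*r^2 + Q*s^2))^2
        - (r*s)^2 * ((m+1)*(P-Q)^2 + ((m/2)*(P+Q))^2)
        = (1/4) * (m^2 * ((r^2 - s^2) * (P*(P*r^2) - Q*(Q*s^2)))
            - 4*(m+1) * ((r*s)^2 * (P-Q)^2)) := by ring
    linarith [hL4, expand.le, expand.ge]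
  -- Cauchy–Schwarz
  have cs : (A*|v| + B*u)^2 ≤ (A^2 + B^2) * (u^2 + v^2) := by
    nlinarith [sq_nonneg (A*u - B*|v|), sq_abs v]
  have h1 : (A*|v| + B*u)^2 ≤ C^2 := by
    have h2 : (A^2 + B^2) * (u^2 + v^2) ≤ (A^2 + B^2) * (r*s)^2 :=
      mul_le_mul_of_nonneg_left huv (by positivity)
    have h2' : (A^2 + B^2) * (r*s)^2 = (r*s)^2 * (A^2 + B^2) := by ring
    linarith [cs, h2, key, h2'.le, h2'.ge]
  have h3 : A*|v| + B*u ≤ C := by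
    rcases le_or_gt (A*|v| + B*u) 0 with h | h
    · linarith
    · nlinarith [h1, hC0, h]
  have goal_eq : Real.sqrt (m+1) * |(P - Q) * v| = A * |v| := by
    rw [hA, abs_mul]; ring
  rw [goal_eq, hPr, hPs]
  have : (m/2) * (P*r^2 + Q*s^2 - (P+Q)*u) = C - B*u := by rw [hB, hC]; ring
  linarith [h3, this.le]

/-- For `σ > 2` and `σ|β| < √(2σ+1)`, for all complex `a, b`:
`Re[(1 − iβ)(|a|^{2σ}a − |b|^{2σ}b) · conj(a − b)]
  ≥ (1 − σ|β|/√(2σ+1)) · 2^{−2σ} · |a − b|^{2σ+2}`. -/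
theorem stmt5 (σ β : ℝ) (hσ : 2 < σ) (hβ : σ * |β| < Real.sqrt (2 * σ + 1)) (a b : ℂ) :
    (1 - σ * |β| / Real.sqrt (2 * σ + 1)) * (2 : ℝ) ^ (-(2 * σ)) *
        ‖a - b‖ ^ (2 * σ + 2)
      ≤ ((1 - Complex.I * (β : ℂ)) *
          (((‖a‖ ^ (2 * σ) : ℝ) : ℂ) * a - ((‖b‖ ^ (2 * σ) : ℝ) : ℂ) * b) *
          (starRingEnd ℂ) (a - b)).re := by
  have hm1 : (1:ℝ) ≤ 2*σ := by linarith
  have hm0 : (0:ℝ) ≤ 2*σ := by linarith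
  set r : ℝ := ‖a‖ with hr
  set s : ℝ := ‖b‖ with hs
  set D : ℝ := ‖a - b‖ with hD
  have hr0 : 0 ≤ r := norm_nonneg a
  have hs0 : 0 ≤ s := norm_nonneg b
  have hD0 : 0 ≤ D := norm_nonneg (a - b)
  set u : ℝ := a.re*b.re + a.im*b.im with hu
  set v : ℝ := a.im*b.re - a.re*b.im with hv
  set P : ℝ := r^(2*σ) with hP
  set Q : ℝ := s^(2*σ) with hQ
  clear_value r s D
  have hP0 : 0 ≤ P := hP ▸ Real.rpow_nonneg hr0 _
  have hQ0 : 0 ≤ Q := hQ ▸ Real.rpow_nonneg hs0 _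
  have hra : r^2 = a.re^2 + a.im^2 := by
    rw [hr, Complex.sq_norm, Complex.normSq_apply]; ring
  have hsb : s^2 = b.re^2 + b.im^2 := by
    rw [hs, Complex.sq_norm, Complex.normSq_apply]; ring
  have hD2 : D^2 = r^2 + s^2 - 2*u := by
    rw [hD, Complex.sq_norm, Complex.normSq_apply, hra, hsb, hu]
    simp [Complex.sub_re, Complex.sub_im]; ring
  have huv : u^2 + v^2 ≤ (r*s)^2 := by
    have : (r*s)^2 = r^2 * s^2 := by ring
    rw [this, hra, hsb, hu, hv]; nlinarith [sq_nonneg (a.re*b.re)]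
  have hPr : r^(2*σ+2) = P*r^2 := by
    rw [hP, Real.rpow_add' hr0 (by linarith : 2*σ+2 ≠ 0), Real.rpow_two]
  have hPs : s^(2*σ+2) = Q*s^2 := by
    rw [hQ, Real.rpow_add' hs0 (by linarith : 2*σ+2 ≠ 0), Real.rpow_two]
  clear_value u v P Q
  set E : ℝ := P*r^2 + Q*s^2 - (P+Q)*u with hE
  clear_value E
  -- re/im computation
  have hT : ((1 - Complex.I * (β : ℂ)) * (((P : ℝ) : ℂ) * a - ((Q : ℝ) : ℂ) * b) *
      (starRingEnd ℂ) (a - b)).re = E + β * ((Q - P)*v) := by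
    rw [hE, hra, hsb, hu, hv]
    simp only [Complex.mul_re, Complex.mul_im, Complex.sub_re, Complex.sub_im, Complex.one_re,
      Complex.one_im, Complex.I_re, Complex.I_im, Complex.ofReal_re, Complex.ofReal_im,
      Complex.conj_re, Complex.conj_im]
    ring
  have hS : 0 < Real.sqrt (2*σ+1) := Real.sqrt_pos.2 (by linarith)
  set k : ℝ := σ * |β| / Real.sqrt (2*σ+1) with hk
  clear_value k
  have hk1 : k < 1 := by rw [hk]; exact (div_lt_one hS).2 hβ
  have hk0 : 0 ≤ k := by rw [hk]; positivity
  -- L5 instance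
  have h2 := L5 hm1 hr0 hs0 huv
  rw [hPr, hPs, ← hP, ← hQ] at h2
  have h2' : Real.sqrt (2*σ+1) * |(P - Q)*v| ≤ σ * E := by
    have e : (2*σ/2) * (P*r^2 + Q*s^2 - (P + Q)*u) = σ * E := by rw [hE]; ring
    linarith [h2, e.le, e.ge]
  have h3 : |(P - Q)*v| ≤ σ*E / Real.sqrt (2*σ+1) := by
    rw [le_div_iff₀ hS]; linarith [h2']
  have h4 : |β| * |(P - Q)*v| ≤ k * E := by
    have h5 := mul_le_mul_of_nonneg_left h3 (abs_nonneg β)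
    have e : |β| * (σ*E / Real.sqrt (2*σ+1)) = k * E := by rw [hk]; ring
    linarith [h5, e.le, e.ge]
  have h5 : -(|β| * |(P - Q)*v|) ≤ β * ((Q - P)*v) := by
    have e : |β * ((Q - P)*v)| = |β| * |(P - Q)*v| := by
      rw [abs_mul, abs_mul, abs_mul, abs_sub_comm Q P]
    linarith [neg_abs_le (β * ((Q - P)*v)), e.le, e.ge]
  -- Lemma A part
  have a1 : 0 ≤ (P - Q)*(r^2 - s^2) := by
    rcases le_total r s with h | h
    · have p1 : P ≤ Q := by rw [hP, hQ]; exact Real.rpow_le_rpow hr0 h hm0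
      have p2 : r^2 ≤ s^2 := pow_le_pow_left₀ hr0 h 2
      calc (0:ℝ) ≤ (Q - P)*(s^2 - r^2) := mul_nonneg (by linarith) (by linarith)
        _ = (P - Q)*(r^2 - s^2) := by ring
    · have p1 : Q ≤ P := by rw [hP, hQ]; exact Real.rpow_le_rpow hs0 h hm0
      have p2 : s^2 ≤ r^2 := pow_le_pow_left₀ hs0 h 2
      exact mul_nonneg (by linarith) (by linarith)
  have a2 : (1/2)*((P + Q)*D^2) ≤ E := by
    have e : E - (1/2)*((P + Q)*D^2) = (1/2)*((P - Q)*(r^2 - s^2)) := by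
      rw [hE, hD2]; ring
    linarith [a1, e.le, e.ge]
  have hcx := (convexOn_rpow hm1).2 (Set.mem_Ici.2 hr0) (Set.mem_Ici.2 hs0)
    (by norm_num : (0:ℝ) ≤ 1/2) (by norm_num : (0:ℝ) ≤ 1/2) (by norm_num : (1:ℝ)/2 + 1/2 = 1)
  simp only [smul_eq_mul] at hcx
  have a3 : (D/2)^(2*σ) ≤ (1/2)*(P + Q) := by
    have e1 : (D/2)^(2*σ) ≤ (1/2*r + 1/2*s)^(2*σ) := by
      apply Real.rpow_le_rpow (by positivity) _ hm0
      have := norm_sub_le a b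
      rw [← hr, ← hs, ← hD] at this
      linarith
    have e2 : (1/2*r + 1/2*s)^(2*σ) ≤ 1/2 * P + 1/2 * Q := by rw [hP, hQ]; exact hcx
    linarith
  have a4 : (D/2)^(2*σ) = (2:ℝ)^(-(2*σ)) * D^(2*σ) := by
    rw [Real.div_rpow hD0 (by norm_num : (0:ℝ) ≤ 2),
      Real.rpow_neg (by norm_num : (0:ℝ) ≤ 2)]
    ring
  have a5 : D^(2*σ) * D^2 = D^(2*σ+2) := by
    rw [Real.rpow_add' hD0 (by linarith : 2*σ+2 ≠ 0), Real.rpow_two]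
  have hA : (2:ℝ)^(-(2*σ)) * D^(2*σ+2) ≤ E := by
    have m1 : (D/2)^(2*σ) * D^2 ≤ (1/2)*(P + Q) * D^2 :=
      mul_le_mul_of_nonneg_right a3 (sq_nonneg D)
    have e : (2:ℝ)^(-(2*σ)) * D^(2*σ+2) = (D/2)^(2*σ) * D^2 := by
      rw [a4, ← a5]; ring
    linarith [m1, e.le, e.ge, a2]
  have hE0 : 0 ≤ E := le_trans (by positivity) hA
  rw [hT]
  have final1 : (1 - k)*((2:ℝ)^(-(2*σ)) * D^(2*σ+2)) ≤ (1 - k)*E :=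
    mul_le_mul_of_nonneg_left hA (by linarith)
  linarith [h4, h5, final1, hE0]
end

section
/- Let σ > 0 be a real number. There exists a constant C > 0, depending only on σ, such that for every continuously differentiable compactly supported function u : ℝ² → ℂ one has ‖u‖_{L^{4σ+2}(ℝ²)} ≤ C · ‖∇u‖_{L²(ℝ²)}^{σ/(2σ+1)} · ‖u‖_{L^{2σ+2}(ℝ²)}^{(σ+1)/(2σ+1)}. -/
noncomputable section
open MeasureTheory Module
open scoped NNReal ENNReal

open MeasureTheory

theorem gns_core {s : ℝ≥0} (hs : 1 < s) {p p' : ℝ≥0} (hp : 1 ≤ p) (hp2 : (p:ℝ) < 2)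
    (hp' : (p' : ℝ)⁻¹ = (p : ℝ)⁻¹ - 2⁻¹) {t : ℝ} (ht0 : 0 < t)
    (ht : (p:ℝ)⁻¹ = 2⁻¹ + t⁻¹) :
    ∃ C : ℝ≥0, 0 < C ∧ ∀ u : ℝ × ℝ → ℂ, ContDiff ℝ 1 u → HasCompactSupport u →
      (∫⁻ x : ℝ × ℝ, (‖u x‖₊ : ℝ≥0∞) ^ ((s : ℝ) * (p' : ℝ))) ^ (p' : ℝ)⁻¹
        ≤ C * (∫⁻ x : ℝ × ℝ, (‖fderiv ℝ u x‖₊ : ℝ≥0∞) ^ (2:ℝ)) ^ (2:ℝ)⁻¹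
            * (∫⁻ x : ℝ × ℝ, (‖u x‖₊ : ℝ≥0∞) ^ (((s:ℝ) - 1) * t)) ^ t⁻¹ := by
  have hp0 : (0:ℝ) < p := lt_of_lt_of_le one_pos (by exact_mod_cast hp)
  have h0p : p ≠ 0 := by exact_mod_cast hp0.ne'
  have hp'pos : (0:ℝ) < (p':ℝ)⁻¹ := by
    rw [hp', sub_pos]; exact inv_strictAnti₀ hp0 hp2
  have h0p' : p' ≠ 0 := by
    intro h; rw [h] at hp'pos; simp at hp'pos
  have hs' : (1:ℝ) < s := by exact_mod_cast hs
  have hs0 : (0:ℝ) < s := by linarith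
  have htinv : t⁻¹ < (p:ℝ)⁻¹ := by rw [ht]; linarith
  have htp : (p:ℝ) < t := by
    exact (inv_lt_inv₀ ht0 hp0).mp htinv
  have hpt1 : (t/(p:ℝ))⁻¹ + (2/(p:ℝ))⁻¹ = 1 := by
    rw [inv_div, inv_div]
    calc (p:ℝ)/t + (p:ℝ)/2 = p * (2⁻¹ + t⁻¹) := by ring
      _ = (p:ℝ) * ((p:ℝ))⁻¹ := by rw [← ht]
      _ = 1 := mul_inv_cancel₀ hp0.ne'
  set C₀ := SNormLESNormFDerivOfEqConst (E := ℝ × ℝ) ℝ (volume : Measure (ℝ × ℝ)) p with hC₀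
  refine ⟨(C₀ + 1) * s, by positivity, fun u hu h2u => ?_⟩
  have h7u := hu.continuous
  have h8u := (hu.fderiv_right (m := 0) le_rfl).continuous
  set v : ℝ × ℝ → ℝ := fun x ↦ ‖u x‖ ^ (s:ℝ) with hv_def
  have hv : ContDiff ℝ 1 v := hu.norm_rpow hs'
  have h2v : HasCompactSupport v := h2u.norm.rpow_const (by positivity)
  have hfin : finrank ℝ (ℝ × ℝ) = 2 := by simp
  have key := eLpNorm_le_eLpNorm_fderiv_of_eq (F := ℝ) (volume : Measure (ℝ × ℝ)) hv h2v hp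
      (by rw [hfin]; norm_num) (by rw [hfin]; push_cast; exact hp')
  have hLHS : eLpNorm v p' volume
      = (∫⁻ x : ℝ × ℝ, (‖u x‖₊ : ℝ≥0∞) ^ ((s : ℝ) * (p' : ℝ))) ^ (p' : ℝ)⁻¹ := by
    rw [eLpNorm_nnreal_eq_lintegral h0p', one_div]
    congr 1
    refine lintegral_congr fun x => ?_
    rw [hv_def]
    simp only []
    rw [enorm_eq_nnnorm, Real.nnnorm_rpow_of_nonneg (norm_nonneg _), nnnorm_norm,
      ENNReal.coe_rpow_of_nonneg _ hs0.le, ← ENNReal.rpow_mul]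
  -- pointwise derivative bound
  have hG : ∀ x : ℝ × ℝ, (‖fderiv ℝ v x‖₊ : ℝ≥0∞) ^ (p:ℝ)
      ≤ ((s : ℝ≥0∞) ^ (p:ℝ)) *
        ((‖u x‖₊ : ℝ≥0∞) ^ (((s:ℝ) - 1) * (p:ℝ)) * (‖fderiv ℝ u x‖₊ : ℝ≥0∞) ^ (p:ℝ)) := by
    intro x
    have h2 := nnnorm_fderiv_norm_rpow_le (hu.differentiable one_ne_zero) (x := x) hs
    have h1 : (‖fderiv ℝ v x‖₊ : ℝ≥0∞)
        ≤ (s : ℝ≥0∞) * (‖u x‖₊ : ℝ≥0∞) ^ ((s:ℝ) - 1) * (‖fderiv ℝ u x‖₊ : ℝ≥0∞) := by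
      calc (‖fderiv ℝ v x‖₊ : ℝ≥0∞)
          ≤ ((s * ‖u x‖₊ ^ ((s:ℝ) - 1) * ‖fderiv ℝ u x‖₊ : ℝ≥0) : ℝ≥0∞) :=
            ENNReal.coe_le_coe.mpr h2
        _ = _ := by
            push_cast [ENNReal.coe_rpow_of_nonneg _ (by linarith : (0:ℝ) ≤ (s:ℝ) - 1)]
            ring
    calc (‖fderiv ℝ v x‖₊ : ℝ≥0∞) ^ (p:ℝ)
        ≤ ((s : ℝ≥0∞) * (‖u x‖₊ : ℝ≥0∞) ^ ((s:ℝ) - 1) * (‖fderiv ℝ u x‖₊ : ℝ≥0∞)) ^ (p:ℝ) :=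
          ENNReal.rpow_le_rpow h1 hp0.le
      _ = _ := by
          rw [ENNReal.mul_rpow_of_nonneg _ _ hp0.le, ENNReal.mul_rpow_of_nonneg _ _ hp0.le,
            ← ENNReal.rpow_mul]
          ring
  -- Hölder step
  have step2 : (∫⁻ x : ℝ × ℝ, (‖u x‖₊ : ℝ≥0∞) ^ (((s:ℝ) - 1) * (p:ℝ))
        * (‖fderiv ℝ u x‖₊ : ℝ≥0∞) ^ (p:ℝ))
      ≤ (∫⁻ x : ℝ × ℝ, (‖u x‖₊ : ℝ≥0∞) ^ (((s:ℝ) - 1) * t)) ^ ((p:ℝ)/t)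
        * (∫⁻ x : ℝ × ℝ, (‖fderiv ℝ u x‖₊ : ℝ≥0∞) ^ (2:ℝ)) ^ ((p:ℝ)/2) := by
    have hconj : Real.HolderConjugate (t/(p:ℝ)) (2/(p:ℝ)) :=
      Real.holderConjugate_iff.mpr ⟨(one_lt_div hp0).mpr htp, hpt1⟩
    have H := ENNReal.lintegral_mul_le_Lp_mul_Lq (volume : Measure (ℝ × ℝ)) hconj
      (f := fun x => (‖u x‖₊ : ℝ≥0∞) ^ (((s:ℝ) - 1) * (p:ℝ)))
      (g := fun x => (‖fderiv ℝ u x‖₊ : ℝ≥0∞) ^ (p:ℝ))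
      (by fun_prop) (by fun_prop)
    rw [one_div, one_div, inv_div, inv_div] at H
    refine H.trans (le_of_eq ?_)
    congr 1
    · congr 1
      refine lintegral_congr fun x => ?_
      rw [← ENNReal.rpow_mul,
        show ((s:ℝ) - 1) * (p:ℝ) * (t/(p:ℝ)) = ((s:ℝ) - 1) * t by field_simp]
    · congr 1
      refine lintegral_congr fun x => ?_
      rw [← ENNReal.rpow_mul, show (p:ℝ) * (2/(p:ℝ)) = 2 by field_simp]
  have step1 : (∫⁻ x : ℝ × ℝ, (‖fderiv ℝ v x‖₊ : ℝ≥0∞) ^ (p:ℝ))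
      ≤ (s : ℝ≥0∞) ^ (p:ℝ) * ∫⁻ x : ℝ × ℝ, (‖u x‖₊ : ℝ≥0∞) ^ (((s:ℝ) - 1) * (p:ℝ))
          * (‖fderiv ℝ u x‖₊ : ℝ≥0∞) ^ (p:ℝ) := by
    rw [← lintegral_const_mul' _ _ (ENNReal.rpow_ne_top_of_nonneg hp0.le ENNReal.coe_ne_top)]
    exact lintegral_mono hG
  have hfd : eLpNorm (fderiv ℝ v) p volume
      ≤ (s : ℝ≥0∞) * ((∫⁻ x : ℝ × ℝ, (‖fderiv ℝ u x‖₊ : ℝ≥0∞) ^ (2:ℝ)) ^ (2:ℝ)⁻¹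
          * (∫⁻ x : ℝ × ℝ, (‖u x‖₊ : ℝ≥0∞) ^ (((s:ℝ) - 1) * t)) ^ t⁻¹) := by
    rw [eLpNorm_nnreal_eq_lintegral h0p, one_div]
    calc (∫⁻ x : ℝ × ℝ, (‖fderiv ℝ v x‖₊ : ℝ≥0∞) ^ (p:ℝ)) ^ (p:ℝ)⁻¹
        ≤ ((s : ℝ≥0∞) ^ (p:ℝ) *
            ((∫⁻ x : ℝ × ℝ, (‖u x‖₊ : ℝ≥0∞) ^ (((s:ℝ) - 1) * t)) ^ ((p:ℝ)/t)
            * (∫⁻ x : ℝ × ℝ, (‖fderiv ℝ u x‖₊ : ℝ≥0∞) ^ (2:ℝ)) ^ ((p:ℝ)/2))) ^ (p:ℝ)⁻¹ := by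
          gcongr
          exact step1.trans (by gcongr)
      _ = _ := by
          rw [ENNReal.mul_rpow_of_nonneg _ _ (by positivity),
            ENNReal.mul_rpow_of_nonneg _ _ (by positivity),
            ← ENNReal.rpow_mul, ← ENNReal.rpow_mul, ← ENNReal.rpow_mul,
            mul_inv_cancel₀ hp0.ne', ENNReal.rpow_one,
            show (p:ℝ)/t * (p:ℝ)⁻¹ = t⁻¹ by field_simp,
            show (p:ℝ)/2 * (p:ℝ)⁻¹ = 2⁻¹ by field_simp]
          ring
  calc (∫⁻ x : ℝ × ℝ, (‖u x‖₊ : ℝ≥0∞) ^ ((s : ℝ) * (p' : ℝ))) ^ (p' : ℝ)⁻¹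
      = eLpNorm v p' volume := hLHS.symm
    _ ≤ C₀ * eLpNorm (fderiv ℝ v) p volume := key
    _ ≤ C₀ * ((s : ℝ≥0∞) * ((∫⁻ x : ℝ × ℝ, (‖fderiv ℝ u x‖₊ : ℝ≥0∞) ^ (2:ℝ)) ^ (2:ℝ)⁻¹
          * (∫⁻ x : ℝ × ℝ, (‖u x‖₊ : ℝ≥0∞) ^ (((s:ℝ) - 1) * t)) ^ t⁻¹)) := by gcongr
    _ = ((C₀ : ℝ≥0∞) * s) * ((∫⁻ x : ℝ × ℝ, (‖fderiv ℝ u x‖₊ : ℝ≥0∞) ^ (2:ℝ)) ^ (2:ℝ)⁻¹)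
          * ((∫⁻ x : ℝ × ℝ, (‖u x‖₊ : ℝ≥0∞) ^ (((s:ℝ) - 1) * t)) ^ t⁻¹) := by ring
    _ ≤ _ := by
        gcongr
        push_cast
        gcongr
        exact le_self_add

theorem gns_main (σ : ℝ) (hσ : 0 < σ) :
    ∃ C : ℝ≥0, 0 < C ∧ ∀ u : ℝ × ℝ → ℂ, ContDiff ℝ 1 u → HasCompactSupport u →
      (∫⁻ x : ℝ × ℝ, (‖u x‖₊ : ℝ≥0∞) ^ (4*σ+2)) ^ (4*σ+2)⁻¹
        ≤ C * (∫⁻ x : ℝ × ℝ, (‖fderiv ℝ u x‖₊ : ℝ≥0∞) ^ (2:ℝ)) ^ (σ/(2*(2*σ+1)))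
            * (∫⁻ x : ℝ × ℝ, (‖u x‖₊ : ℝ≥0∞) ^ (2*σ+2)) ^ ((σ+1)/((2*σ+2)*(2*σ+1))) := by
  have hσ1 : (0:ℝ) < 2*σ+1 := by linarith
  have hσ2 : (0:ℝ) < 2*σ+2 := by linarith
  have hσ4 : (0:ℝ) < 4*σ+2 := by linarith
  rcases le_or_gt 1 σ with hσge | hσlt
  · -- σ ≥ 1
    set s : ℝ≥0 := ((2*σ+1)/σ).toNNReal with hs_def
    set p : ℝ≥0 := (2*σ/(σ+1)).toNNReal with hp_def
    set p' : ℝ≥0 := (2*σ).toNNReal with hp'_def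
    have hsc : (s:ℝ) = (2*σ+1)/σ := Real.coe_toNNReal _ (by positivity)
    have hpc : (p:ℝ) = 2*σ/(σ+1) := Real.coe_toNNReal _ (by positivity)
    have hp'c : (p':ℝ) = 2*σ := Real.coe_toNNReal _ (by positivity)
    have hs : 1 < s := by
      rw [← NNReal.coe_lt_coe, hsc, NNReal.coe_one, lt_div_iff₀ hσ]; linarith
    have hp : 1 ≤ p := by
      rw [← NNReal.coe_le_coe, hpc, NNReal.coe_one, le_div_iff₀ (by positivity)]; linarith
    have hp2 : (p:ℝ) < 2 := by rw [hpc, div_lt_iff₀ (by positivity)]; linarith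
    have hp' : (p' : ℝ)⁻¹ = (p : ℝ)⁻¹ - 2⁻¹ := by
      rw [hp'c, hpc]; field_simp; ring
    have ht : (p:ℝ)⁻¹ = 2⁻¹ + (2*σ)⁻¹ := by rw [hpc]; field_simp
    obtain ⟨C, hC0, hC⟩ := gns_core hs hp hp2 hp' (t := 2*σ) (by positivity) ht
    refine ⟨max C 1, lt_of_lt_of_le one_pos (le_max_right _ _), fun u hu h2u => ?_⟩
    have h := hC u hu h2u
    rw [hsc, hp'c] at h
    rw [show (2*σ+1)/σ * (2*σ) = 4*σ+2 by field_simp; ring,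
      show ((2*σ+1)/σ - 1) * (2*σ) = 2*σ+2 by field_simp; ring] at h
    have hθ : (0:ℝ) < σ/(2*σ+1) := by positivity
    have h2 := ENNReal.rpow_le_rpow h hθ.le
    rw [← ENNReal.rpow_mul, ENNReal.mul_rpow_of_nonneg _ _ hθ.le,
      ENNReal.mul_rpow_of_nonneg _ _ hθ.le, ← ENNReal.rpow_mul, ← ENNReal.rpow_mul,
      show (2*σ)⁻¹ * (σ/(2*σ+1)) = (4*σ+2)⁻¹ by field_simp; ring,
      show (2:ℝ)⁻¹ * (σ/(2*σ+1)) = σ/(2*(2*σ+1)) by field_simp] at h2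
    rw [show (σ+1)/((2*σ+2)*(2*σ+1)) = (4*σ+2)⁻¹ by field_simp; ring]
    refine h2.trans ?_
    gcongr
    calc (C:ℝ≥0∞) ^ (σ/(2*σ+1)) ≤ ((C ⊔ 1 : ℝ≥0) : ℝ≥0∞) ^ (σ/(2*σ+1)) :=
          ENNReal.rpow_le_rpow (by exact_mod_cast le_max_left C 1) hθ.le
      _ ≤ ((C ⊔ 1 : ℝ≥0) : ℝ≥0∞) ^ (1:ℝ) :=
          ENNReal.rpow_le_rpow_of_exponent_le (by exact_mod_cast le_max_right C 1)
            (by rw [div_le_one hσ1]; linarith)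
      _ = _ := ENNReal.rpow_one _
  · -- σ < 1
    set s : ℝ≥0 := (σ+2).toNNReal with hs_def
    have hsc : (s:ℝ) = σ+2 := Real.coe_toNNReal _ (by positivity)
    have hs : 1 < s := by
      rw [← NNReal.coe_lt_coe, hsc, NNReal.coe_one]; linarith
    have hp' : (((2:ℝ≥0)) : ℝ)⁻¹ = (((1:ℝ≥0)) : ℝ)⁻¹ - 2⁻¹ := by norm_num
    have ht : (((1:ℝ≥0)) : ℝ)⁻¹ = 2⁻¹ + (2:ℝ)⁻¹ := by norm_num
    obtain ⟨C, hC0, hC⟩ := gns_core hs (le_refl 1) (by norm_num) hp' (t := 2) (by norm_num) ht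
    refine ⟨max C 1, lt_of_lt_of_le one_pos (le_max_right _ _), fun u hu h2u => ?_⟩
    have h7u := hu.continuous
    have h := hC u hu h2u
    rw [hsc] at h
    rw [show (σ+2) * ((2:ℝ≥0):ℝ) = 2*σ+4 by push_cast; ring,
      show (σ+2-1) * (2:ℝ) = 2*σ+2 by ring,
      show (((2:ℝ≥0)):ℝ)⁻¹ = (2:ℝ)⁻¹ by norm_num] at h
    set G := (∫⁻ x : ℝ × ℝ, (‖fderiv ℝ u x‖₊ : ℝ≥0∞) ^ (2:ℝ)) with hG_def
    set J := (∫⁻ x : ℝ × ℝ, (‖u x‖₊ : ℝ≥0∞) ^ (2*σ+2)) with hJ_def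
    set Q := (∫⁻ x : ℝ × ℝ, (‖u x‖₊ : ℝ≥0∞) ^ (2*σ+4)) with hQ_def
    -- square the core inequality
    have hQle : Q ≤ (C:ℝ≥0∞)^(2:ℝ) * G * J := by
      have h2 := ENNReal.rpow_le_rpow h (by norm_num : (0:ℝ) ≤ 2)
      rw [← ENNReal.rpow_mul, ENNReal.mul_rpow_of_nonneg _ _ (by norm_num : (0:ℝ) ≤ 2),
        ENNReal.mul_rpow_of_nonneg _ _ (by norm_num : (0:ℝ) ≤ 2),
        ← ENNReal.rpow_mul, ← ENNReal.rpow_mul] at h2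
      norm_num [ENNReal.rpow_one] at h2
      convert h2 using 2 <;> norm_num
    -- interpolation
    have h1σ : (0:ℝ) < 1 - σ := by linarith
    have hconj : Real.HolderConjugate (1-σ)⁻¹ σ⁻¹ :=
      Real.holderConjugate_iff.mpr ⟨(one_lt_inv₀ h1σ).mpr (by linarith), by rw [inv_inv, inv_inv]; ring⟩
    have hK : (∫⁻ x : ℝ × ℝ, (‖u x‖₊ : ℝ≥0∞) ^ (4*σ+2)) ≤ J ^ (1-σ) * Q ^ σ := by
      have H := ENNReal.lintegral_mul_le_Lp_mul_Lq (volume : Measure (ℝ × ℝ)) hconj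
        (f := fun x => (‖u x‖₊ : ℝ≥0∞) ^ ((2*σ+2)*(1-σ)))
        (g := fun x => (‖u x‖₊ : ℝ≥0∞) ^ (2*σ*(σ+2)))
        (by fun_prop) (by fun_prop)
      have e1 : (∫⁻ x : ℝ × ℝ, ((‖u x‖₊ : ℝ≥0∞) ^ ((2*σ+2)*(1-σ))) ^ ((1-σ)⁻¹)) = J := by
        refine lintegral_congr fun x => ?_
        rw [← ENNReal.rpow_mul, show (2*σ+2)*(1-σ)*(1-σ)⁻¹ = 2*σ+2 by field_simp]
      have e2 : (∫⁻ x : ℝ × ℝ, ((‖u x‖₊ : ℝ≥0∞) ^ (2*σ*(σ+2))) ^ (σ⁻¹)) = Q := by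
        refine lintegral_congr fun x => ?_
        rw [← ENNReal.rpow_mul, show 2*σ*(σ+2)*σ⁻¹ = 2*σ+4 by field_simp; ring]
      rw [one_div, one_div, inv_inv, inv_inv] at H
      rw [show (fun x : ℝ × ℝ => (‖u x‖₊ : ℝ≥0∞) ^ ((2*σ+2)*(1-σ))) = fun x : ℝ × ℝ => (‖u x‖₊ : ℝ≥0∞) ^ ((2*σ+2)*(1-σ)) from rfl] at H
      rw [e1, e2] at H
      refine (le_of_eq ?_).trans H
      refine lintegral_congr fun x => ?_
      simp only [Pi.mul_apply]
      rw [← ENNReal.rpow_add_of_nonneg _ _ (by nlinarith) (by positivity)]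
      congr 1; ring
    have hKle : (∫⁻ x : ℝ × ℝ, (‖u x‖₊ : ℝ≥0∞) ^ (4*σ+2))
        ≤ (C:ℝ≥0∞)^(2*σ) * G ^ σ * J := by
      calc (∫⁻ x : ℝ × ℝ, (‖u x‖₊ : ℝ≥0∞) ^ (4*σ+2)) ≤ J ^ (1-σ) * Q ^ σ := hK
        _ ≤ J ^ (1-σ) * ((C:ℝ≥0∞)^(2:ℝ) * G * J) ^ σ := by gcongr
        _ = (C:ℝ≥0∞)^(2*σ) * G ^ σ * (J ^ (1-σ) * J ^ σ) := by
            rw [ENNReal.mul_rpow_of_nonneg _ _ hσ.le, ENNReal.mul_rpow_of_nonneg _ _ hσ.le,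
              ← ENNReal.rpow_mul]
            ring
        _ = (C:ℝ≥0∞)^(2*σ) * G ^ σ * J := by
            rw [← ENNReal.rpow_add_of_nonneg _ _ h1σ.le hσ.le]
            norm_num
    have h3 := ENNReal.rpow_le_rpow hKle (by positivity : (0:ℝ) ≤ (4*σ+2)⁻¹)
    rw [ENNReal.mul_rpow_of_nonneg _ _ (by positivity), ENNReal.mul_rpow_of_nonneg _ _ (by positivity),
      ← ENNReal.rpow_mul, ← ENNReal.rpow_mul,
      show σ * (4*σ+2)⁻¹ = σ/(2*(2*σ+1)) by rw [show (2:ℝ)*(2*σ+1) = 4*σ+2 by ring, div_eq_mul_inv],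
      show 2*σ * (4*σ+2)⁻¹ = σ/(2*σ+1) by rw [show (4*σ+2:ℝ) = 2*(2*σ+1) by ring, mul_inv, div_eq_mul_inv]; ring] at h3
    rw [show (σ+1)/((2*σ+2)*(2*σ+1)) = (4*σ+2)⁻¹ by field_simp; ring]
    refine h3.trans ?_
    gcongr
    calc (C:ℝ≥0∞) ^ (σ/(2*σ+1)) ≤ ((C ⊔ 1 : ℝ≥0) : ℝ≥0∞) ^ (σ/(2*σ+1)) :=
          ENNReal.rpow_le_rpow (by exact_mod_cast le_max_left C 1) (by positivity)
      _ ≤ ((C ⊔ 1 : ℝ≥0) : ℝ≥0∞) ^ (1:ℝ) :=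
          ENNReal.rpow_le_rpow_of_exponent_le (by exact_mod_cast le_max_right C 1)
            (by rw [div_le_one hσ1]; linarith)
      _ = _ := ENNReal.rpow_one _

/-- Gagliardo–Nirenberg-type inequality on `ℝ²`: there is `C > 0` depending only on `σ > 0`
such that for every `C¹` compactly supported `u : ℝ² → ℂ`,
`‖u‖_{L^{4σ+2}} ≤ C ‖∇u‖_{L²}^{σ/(2σ+1)} ‖u‖_{L^{2σ+2}}^{(σ+1)/(2σ+1)}`.
Here `|∇u(x)|² = |∂₁u(x)|² + |∂₂u(x)|²`. -/
theorem stmt6 (σ : ℝ) (hσ : 0 < σ) :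
    ∃ C : ℝ, 0 < C ∧ ∀ u : ℝ × ℝ → ℂ, ContDiff ℝ 1 u → HasCompactSupport u →
      (∫ x : ℝ × ℝ, ‖u x‖ ^ (4 * σ + 2)) ^ (1 / (4 * σ + 2))
        ≤ C * (∫ x : ℝ × ℝ, (‖fderiv ℝ u x (1, 0)‖ ^ 2
                + ‖fderiv ℝ u x (0, 1)‖ ^ 2)) ^ (σ / (2 * (2 * σ + 1)))
            * (∫ x : ℝ × ℝ, ‖u x‖ ^ (2 * σ + 2))
                ^ ((σ + 1) / ((2 * σ + 2) * (2 * σ + 1))) := by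
  obtain ⟨C, hC0, hC⟩ := gns_main σ hσ
  have hC0' : (0:ℝ) < C := hC0
  have hq0 : (0:ℝ) < 4*σ+2 := by linarith
  have hr0 : (0:ℝ) < 2*σ+2 := by linarith
  have he₁ : (0:ℝ) ≤ σ/(2*(2*σ+1)) := by positivity
  have he₂ : (0:ℝ) ≤ (σ+1)/((2*σ+2)*(2*σ+1)) := by positivity
  refine ⟨2*(C:ℝ), by positivity, fun u hu h2u => ?_⟩
  have h7u := hu.continuous
  have h8u := (hu.fderiv_right (m := 0) le_rfl).continuous
  set K := ∫⁻ x : ℝ × ℝ, (‖u x‖₊ : ℝ≥0∞) ^ (4*σ+2) with hK_def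
  set J := ∫⁻ x : ℝ × ℝ, (‖u x‖₊ : ℝ≥0∞) ^ (2*σ+2) with hJ_def
  set G := ∫⁻ x : ℝ × ℝ, (‖fderiv ℝ u x‖₊ : ℝ≥0∞) ^ (2:ℝ) with hG_def
  set g : ℝ × ℝ → ℝ := fun x => ‖fderiv ℝ u x (1,0)‖^2 + ‖fderiv ℝ u x (0,1)‖^2 with hg_def
  set D := ∫⁻ x : ℝ × ℝ, ENNReal.ofReal (g x) with hD_def
  have hg_cont : Continuous g := by
    have c1 : Continuous fun x : ℝ × ℝ => fderiv ℝ u x (1,0) := h8u.clm_apply continuous_const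
    have c2 : Continuous fun x : ℝ × ℝ => fderiv ℝ u x (0,1) := h8u.clm_apply continuous_const
    exact ((c1.norm.pow 2).add (c2.norm.pow 2))
  have hg_supp : HasCompactSupport g := by
    have hfd : HasCompactSupport (fderiv ℝ u) := h2u.fderiv (𝕜 := ℝ)
    have s1 : HasCompactSupport (fun x : ℝ × ℝ => ‖fderiv ℝ u x (1,0)‖^2) :=
      hfd.comp_left (g := fun L : ℝ × ℝ →L[ℝ] ℂ => ‖L (1,0)‖^2) (by simp)
    have s2 : HasCompactSupport (fun x : ℝ × ℝ => ‖fderiv ℝ u x (0,1)‖^2) :=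
      hfd.comp_left (g := fun L : ℝ × ℝ →L[ℝ] ℂ => ‖L (0,1)‖^2) (by simp)
    exact s1.add s2
  -- real integrals as toReal of lintegrals
  have hIq : (∫ x : ℝ × ℝ, ‖u x‖ ^ (4*σ+2)) = K.toReal := by
    rw [integral_eq_lintegral_of_nonneg_ae (Filter.Eventually.of_forall fun x => by positivity)
      ((h7u.norm.rpow_const fun x => Or.inr hq0.le).aestronglyMeasurable)]
    congr 1
    refine lintegral_congr fun x => ?_
    rw [← ENNReal.ofReal_rpow_of_nonneg (norm_nonneg _) hq0.le, ofReal_norm_eq_enorm, enorm_eq_nnnorm]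
  have hIr : (∫ x : ℝ × ℝ, ‖u x‖ ^ (2*σ+2)) = J.toReal := by
    rw [integral_eq_lintegral_of_nonneg_ae (Filter.Eventually.of_forall fun x => by positivity)
      ((h7u.norm.rpow_const fun x => Or.inr hr0.le).aestronglyMeasurable)]
    congr 1
    refine lintegral_congr fun x => ?_
    rw [← ENNReal.ofReal_rpow_of_nonneg (norm_nonneg _) hr0.le, ofReal_norm_eq_enorm, enorm_eq_nnnorm]
  have hID : (∫ x : ℝ × ℝ, (‖fderiv ℝ u x (1,0)‖^2 + ‖fderiv ℝ u x (0,1)‖^2)) = D.toReal := by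
    rw [integral_eq_lintegral_of_nonneg_ae (Filter.Eventually.of_forall fun x => by positivity)
      hg_cont.aestronglyMeasurable]
  -- pointwise gradient comparison
  have hptw : ∀ x : ℝ × ℝ, (‖fderiv ℝ u x‖₊ : ℝ≥0∞) ^ (2:ℝ) ≤ 2 * ENNReal.ofReal (g x) := by
    intro x
    set L := fderiv ℝ u x with hL_def
    have hL : ‖L‖ ≤ ‖L (1,0)‖ + ‖L (0,1)‖ := by
      refine L.opNorm_le_bound (by positivity) fun y => ?_
      have hy : L y = y.1 • L (1,0) + y.2 • L (0,1) := by
        rw [← L.map_smul, ← L.map_smul, ← L.map_add]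
        congr 1
        ext <;> simp
      rw [hy]
      calc ‖y.1 • L (1,0) + y.2 • L (0,1)‖ ≤ ‖y.1 • L (1,0)‖ + ‖y.2 • L (0,1)‖ := norm_add_le _ _
        _ = ‖y.1‖ * ‖L (1,0)‖ + ‖y.2‖ * ‖L (0,1)‖ := by rw [norm_smul, norm_smul]
        _ ≤ ‖y‖ * ‖L (1,0)‖ + ‖y‖ * ‖L (0,1)‖ := by
            gcongr
            · exact norm_fst_le y
            · exact norm_snd_le y
        _ = (‖L (1,0)‖ + ‖L (0,1)‖) * ‖y‖ := by ring
    have h2 : ‖L‖^2 ≤ 2 * (‖L (1,0)‖^2 + ‖L (0,1)‖^2) := by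
      nlinarith [hL, sq_nonneg (‖L (1,0)‖ - ‖L (0,1)‖), norm_nonneg L, norm_nonneg (L (1,0)), norm_nonneg (L (0,1))]
    calc (‖L‖₊ : ℝ≥0∞) ^ (2:ℝ) = ENNReal.ofReal (‖L‖^2) := by
          rw [← enorm_eq_nnnorm, ← ofReal_norm_eq_enorm, ENNReal.ofReal_rpow_of_nonneg (norm_nonneg _)
            (by norm_num : (0:ℝ) ≤ 2), Real.rpow_two]
      _ ≤ ENNReal.ofReal (2 * (‖L (1,0)‖^2 + ‖L (0,1)‖^2)) := ENNReal.ofReal_le_ofReal h2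
      _ = 2 * ENNReal.ofReal (g x) := by
          rw [ENNReal.ofReal_mul (by norm_num : (0:ℝ) ≤ 2)]
          norm_num [hg_def, hL_def]
  have hGD : G ≤ 2 * D := by
    calc G ≤ ∫⁻ x : ℝ × ℝ, 2 * ENNReal.ofReal (g x) := lintegral_mono hptw
      _ = 2 * D := lintegral_const_mul' _ _ (by norm_num)
  -- finiteness
  have hJfin : J ≠ ⊤ := by
    have hint : Integrable (fun x : ℝ × ℝ => ‖u x‖ ^ (2*σ+2)) volume :=
      (h7u.norm.rpow_const fun x => Or.inr hr0.le).integrable_of_hasCompactSupport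
        (h2u.norm.rpow_const hr0.ne')
    have h2 := hint.lintegral_lt_top
    rw [show (∫⁻ x : ℝ × ℝ, ENNReal.ofReal (‖u x‖ ^ (2*σ+2))) = J from
      lintegral_congr fun x => by
        rw [← ENNReal.ofReal_rpow_of_nonneg (norm_nonneg _) hr0.le, ofReal_norm_eq_enorm, enorm_eq_nnnorm]] at h2
    exact h2.ne
  have hDfin : D ≠ ⊤ :=
    (hg_cont.integrable_of_hasCompactSupport hg_supp).lintegral_lt_top.ne
  -- main chain
  have main := hC u hu h2u
  have hchain : K ^ (4*σ+2)⁻¹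
      ≤ ((2*C : ℝ≥0) : ℝ≥0∞) * D ^ (σ/(2*(2*σ+1))) * J ^ ((σ+1)/((2*σ+2)*(2*σ+1))) := by
    refine main.trans ?_
    calc (C : ℝ≥0∞) * G ^ (σ/(2*(2*σ+1))) * J ^ ((σ+1)/((2*σ+2)*(2*σ+1)))
        ≤ (C : ℝ≥0∞) * (2 * D) ^ (σ/(2*(2*σ+1))) * J ^ ((σ+1)/((2*σ+2)*(2*σ+1))) := by
          gcongr
      _ = (C : ℝ≥0∞) * ((2:ℝ≥0∞) ^ (σ/(2*(2*σ+1))) * D ^ (σ/(2*(2*σ+1))))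
            * J ^ ((σ+1)/((2*σ+2)*(2*σ+1))) := by
          rw [ENNReal.mul_rpow_of_nonneg _ _ he₁]
      _ ≤ (C : ℝ≥0∞) * ((2:ℝ≥0∞) ^ (1:ℝ) * D ^ (σ/(2*(2*σ+1))))
            * J ^ ((σ+1)/((2*σ+2)*(2*σ+1))) := by
          have h21 : (2:ℝ≥0∞) ^ (σ/(2*(2*σ+1))) ≤ (2:ℝ≥0∞) ^ (1:ℝ) :=
            ENNReal.rpow_le_rpow_of_exponent_le (by norm_num)
              (by rw [div_le_one (by linarith)]; linarith)
          exact mul_le_mul' (mul_le_mul' le_rfl (mul_le_mul' h21 le_rfl)) le_rfl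
      _ = ((2*C : ℝ≥0) : ℝ≥0∞) * D ^ (σ/(2*(2*σ+1))) * J ^ ((σ+1)/((2*σ+2)*(2*σ+1))) := by
          rw [ENNReal.rpow_one]
          push_cast
          ring
  have hRfin : ((2*C : ℝ≥0) : ℝ≥0∞) * D ^ (σ/(2*(2*σ+1))) * J ^ ((σ+1)/((2*σ+2)*(2*σ+1))) ≠ ⊤ :=
    ENNReal.mul_ne_top (ENNReal.mul_ne_top ENNReal.coe_ne_top
      (ENNReal.rpow_ne_top_of_nonneg he₁ hDfin)) (ENNReal.rpow_ne_top_of_nonneg he₂ hJfin)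
  rw [hIq, hIr, hID, one_div]
  calc K.toReal ^ (4*σ+2)⁻¹ = (K ^ (4*σ+2)⁻¹).toReal := ENNReal.toReal_rpow _ _
    _ ≤ (((2*C : ℝ≥0) : ℝ≥0∞) * D ^ (σ/(2*(2*σ+1))) * J ^ ((σ+1)/((2*σ+2)*(2*σ+1)))).toReal :=
        ENNReal.toReal_mono hRfin hchain
    _ = 2*(C:ℝ) * D.toReal ^ (σ/(2*(2*σ+1))) * J.toReal ^ ((σ+1)/((2*σ+2)*(2*σ+1))) := by
        rw [ENNReal.toReal_mul, ENNReal.toReal_mul, ENNReal.toReal_rpow, ENNReal.toReal_rpow,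
          ENNReal.coe_toReal]
        push_cast
        ring
end
end

section
/- Let σ > 2 be a real number and λ₁, λ₂ ∈ ℂ². For every ε > 0 there exists a constant C = C(ε, σ, λ₁, λ₂) > 0 such that for every continuously differentiable compactly supported function u : ℝ² → ℂ, |Re ∫_{ℝ²} (λ₁·∇(|u|²u)(x) + (λ₂·∇u(x)) |u(x)|²) · conj(u(x)) dx| ≤ ε ∫_{ℝ²} |∇u(x)|² dx + ε ∫_{ℝ²} |u(x)|^{2σ+2} dx + C ∫_{ℝ²} |u(x)|² dx. -/
open MeasureTheory

private lemma aux_pow_bound (ε M σ : ℝ) (hε : 0 < ε) (hM : 0 ≤ M) (hσ : 2 < σ) :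
    ∃ C, 0 < C ∧ ∀ t : ℝ, 0 ≤ t → M * t ^ 6 ≤ ε * t ^ (2 * σ + 2) + C * t ^ 2 := by
  set p : ℝ := 2 * σ - 4 with hp
  have hp0 : 0 < p := by simp [hp]; linarith
  set T : ℝ := max 1 ((M / ε) ^ (1 / p)) with hT
  have hT1 : (1 : ℝ) ≤ T := le_max_left _ _
  have hT0 : 0 ≤ T := by linarith
  refine ⟨M * T ^ 4 + 1, by positivity, fun t ht => ?_⟩
  rcases le_or_gt t T with h | h
  · have h1 : M * t ^ 6 ≤ (M * T ^ 4) * t ^ 2 := by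
      have h4 := pow_le_pow_left₀ ht h 4
      calc M * t ^ 6 = M * t ^ 4 * t ^ 2 := by ring
        _ ≤ M * T ^ 4 * t ^ 2 :=
          mul_le_mul_of_nonneg_right (mul_le_mul_of_nonneg_left h4 hM) (sq_nonneg t)
    have h2 : 0 ≤ ε * t ^ (2 * σ + 2) := by positivity
    nlinarith [sq_nonneg t]
  · have ht0 : 0 < t := lt_of_le_of_lt hT0 h
    have hMε : M / ε ≤ t ^ p := by
      have h1 : (M / ε) ^ (1 / p) ≤ t := le_trans (le_max_right _ _) h.le
      have h2 := Real.rpow_le_rpow (Real.rpow_nonneg (div_nonneg hM hε.le) _) h1 hp0.le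
      rwa [← Real.rpow_mul (div_nonneg hM hε.le), one_div_mul_cancel hp0.ne', Real.rpow_one] at h2
    have hM2 : M ≤ ε * t ^ p := (div_le_iff₀' hε).mp hMε
    have key : M * t ^ 6 ≤ ε * t ^ (2 * σ + 2) := by
      have h3 : M * t ^ 6 ≤ (ε * t ^ p) * t ^ 6 :=
        mul_le_mul_of_nonneg_right hM2 (pow_nonneg ht 6)
      calc M * t ^ 6 ≤ ε * t ^ p * t ^ 6 := h3
        _ = ε * (t ^ p * t ^ (6 : ℝ)) := by rw [← Real.rpow_natCast t 6]; push_cast; ring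
        _ = ε * t ^ (p + 6) := by rw [← Real.rpow_add ht0]
        _ = ε * t ^ (2 * σ + 2) := by
          have h6 : p + 6 = 2 * σ + 2 := by rw [hp]; ring
          rw [h6]
    have : 0 ≤ (M * T ^ 4 + 1) * t ^ 2 := by positivity
    linarith

private lemma aux_young (K t a b ε M : ℝ) (hε : 0 < ε) (hM : M * (2 * ε) = K ^ 2) :
    K * t ^ 3 * (a + b) ≤ ε * (a ^ 2 + b ^ 2) + M * t ^ 6 := by
  have h4 : (0:ℝ) < 4 * ε := by linarith
  have hmain : (4 * ε) * (K * t ^ 3 * (a + b)) ≤ (4 * ε) * (ε * (a ^ 2 + b ^ 2) + M * t ^ 6) := by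
    nlinarith [sq_nonneg (2 * ε * a - K * t ^ 3), sq_nonneg (2 * ε * b - K * t ^ 3),
      sq_nonneg (t ^ 3), mul_nonneg (sq_nonneg (t ^ 3)) hε.le]
  exact le_of_mul_le_mul_left hmain h4

private lemma aux_cubic_eq (u : ℝ × ℝ → ℂ) :
    (fun y => ((‖u y‖ ^ 2 : ℝ) : ℂ) * u y)
      = fun y => (u y * (starRingEnd ℂ) (u y)) * u y := by
  funext y
  rw [Complex.sq_norm, ← Complex.mul_conj]

private lemma aux_fderiv_bound (u : ℝ × ℝ → ℂ) (hcd : ContDiff ℝ 1 u) (x v : ℝ × ℝ) :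
    ‖fderiv ℝ (fun y => ((‖u y‖ ^ 2 : ℝ) : ℂ) * u y) x v‖
      ≤ 3 * ‖u x‖ ^ 2 * ‖fderiv ℝ u x v‖ := by
  have hu : HasFDerivAt u (fderiv ℝ u x) x := (hcd.differentiable one_ne_zero x).hasFDerivAt
  have hconj : HasFDerivAt (fun y => (starRingEnd ℂ) (u y))
      ((Complex.conjCLE : ℂ ≃L[ℝ] ℂ).toContinuousLinearMap.comp (fderiv ℝ u x)) x :=
    (Complex.conjCLE.toContinuousLinearMap.hasFDerivAt).comp x hu
  have H := ((hu.mul hconj).mul hu)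
  rw [aux_cubic_eq u, show (fun y => u y * (starRingEnd ℂ) (u y) * u y) = ((u * fun y => (starRingEnd ℂ) (u y)) * u) from rfl, H.fderiv]
  simp only [ContinuousLinearMap.add_apply, ContinuousLinearMap.smul_apply,
    ContinuousLinearMap.smulRight_apply, ContinuousLinearMap.comp_apply,
    ContinuousLinearEquiv.coe_coe, Complex.conjCLE_apply, smul_eq_mul, Pi.mul_apply]
  have h1 := norm_add_le (u x * (starRingEnd ℂ) (u x) * (fderiv ℝ u x) v)
    (u x * (u x * (starRingEnd ℂ) ((fderiv ℝ u x) v) + (starRingEnd ℂ) (u x) * (fderiv ℝ u x) v))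
  have h2 := norm_add_le (u x * (starRingEnd ℂ) ((fderiv ℝ u x) v))
    ((starRingEnd ℂ) (u x) * (fderiv ℝ u x) v)
  simp only [norm_mul, RCLike.norm_conj] at h1 h2 ⊢
  nlinarith [norm_nonneg (u x), norm_nonneg ((fderiv ℝ u x) v),
    mul_le_mul_of_nonneg_left h2 (norm_nonneg (u x))]

/-- For `σ > 2`, `λ₁, λ₂ ∈ ℂ²` and every `ε > 0` there is `C = C(ε,σ,λ₁,λ₂) > 0` such that
for every `C¹` compactly supported `u : ℝ² → ℂ`,
`|Re ∫ (λ₁·∇(|u|²u) + (λ₂·∇u)|u|²) conj(u) dx|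
  ≤ ε ∫ |∇u|² dx + ε ∫ |u|^{2σ+2} dx + C ∫ |u|² dx`. -/
theorem stmt11 (σ : ℝ) (hσ : 2 < σ) (lam₁ lam₂ : ℂ × ℂ) (ε : ℝ) (hε : 0 < ε) :
    ∃ C : ℝ, 0 < C ∧ ∀ u : ℝ × ℝ → ℂ, ContDiff ℝ 1 u → HasCompactSupport u →
      |(∫ x : ℝ × ℝ,
          (lam₁.1 * fderiv ℝ (fun y => ((‖u y‖ ^ 2 : ℝ) : ℂ) * u y) x ((1 : ℝ), (0 : ℝ))
            + lam₁.2 * fderiv ℝ (fun y => ((‖u y‖ ^ 2 : ℝ) : ℂ) * u y) x ((0 : ℝ), (1 : ℝ))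
            + (lam₂.1 * fderiv ℝ u x ((1 : ℝ), (0 : ℝ))
                + lam₂.2 * fderiv ℝ u x ((0 : ℝ), (1 : ℝ))) * ((‖u x‖ ^ 2 : ℝ) : ℂ))
          * (starRingEnd ℂ) (u x)).re|
        ≤ ε * (∫ x : ℝ × ℝ, (‖fderiv ℝ u x ((1 : ℝ), (0 : ℝ))‖ ^ 2
                + ‖fderiv ℝ u x ((0 : ℝ), (1 : ℝ))‖ ^ 2))
          + ε * (∫ x : ℝ × ℝ, ‖u x‖ ^ (2 * σ + 2))
          + C * (∫ x : ℝ × ℝ, ‖u x‖ ^ 2) := by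
  set K : ℝ := 3 * (‖lam₁.1‖ + ‖lam₁.2‖ + ‖lam₂.1‖ + ‖lam₂.2‖) + 1 with hKdef
  have hK : 0 < K := by positivity
  set M : ℝ := K ^ 2 / (2 * ε) with hMdef
  have hM0 : 0 ≤ M := by positivity
  have hM2ε : M * (2 * ε) = K ^ 2 := by
    rw [hMdef, div_mul_cancel₀]; positivity
  obtain ⟨C, hC, hCb⟩ := aux_pow_bound ε M σ hε hM0 hσ
  refine ⟨C, hC, fun u hcd hsupp => ?_⟩
  set w : ℝ × ℝ → ℂ := fun y => ((‖u y‖ ^ 2 : ℝ) : ℂ) * u y with hwdef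
  -- regularity of w
  have hwcd : ContDiff ℝ 1 w := by
    rw [hwdef, aux_cubic_eq u]
    exact (hcd.mul ((Complex.conjCLE.toContinuousLinearMap.contDiff).comp hcd)).mul hcd
  -- continuity of fderiv applied
  have hduc : Continuous (fderiv ℝ u) := hcd.continuous_fderiv one_ne_zero
  have hdwc : Continuous (fderiv ℝ w) := hwcd.continuous_fderiv one_ne_zero
  have happ : ∀ (f : ℝ × ℝ → ℂ), Continuous (fderiv ℝ f) → ∀ v : ℝ × ℝ,
      Continuous (fun x => fderiv ℝ f x v) := by
    intro f hf v
    exact (ContinuousLinearMap.apply ℝ ℂ v).continuous.comp hf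
  have hdu1 := happ u hduc ((1 : ℝ), (0 : ℝ))
  have hdu2 := happ u hduc ((0 : ℝ), (1 : ℝ))
  have hdw1 := happ w hdwc ((1 : ℝ), (0 : ℝ))
  have hdw2 := happ w hdwc ((0 : ℝ), (1 : ℝ))
  have huc : Continuous u := hcd.continuous
  -- the integrands
  set g : ℝ × ℝ → ℂ := fun x =>
      (lam₁.1 * fderiv ℝ w x ((1 : ℝ), (0 : ℝ))
        + lam₁.2 * fderiv ℝ w x ((0 : ℝ), (1 : ℝ))
        + (lam₂.1 * fderiv ℝ u x ((1 : ℝ), (0 : ℝ))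
            + lam₂.2 * fderiv ℝ u x ((0 : ℝ), (1 : ℝ))) * ((‖u x‖ ^ 2 : ℝ) : ℂ))
        * (starRingEnd ℂ) (u x) with hgdef
  set F1 : ℝ × ℝ → ℝ := fun x => ‖fderiv ℝ u x ((1 : ℝ), (0 : ℝ))‖ ^ 2
      + ‖fderiv ℝ u x ((0 : ℝ), (1 : ℝ))‖ ^ 2 with hF1def
  set F2 : ℝ × ℝ → ℝ := fun x => ‖u x‖ ^ (2 * σ + 2) with hF2def
  set F3 : ℝ × ℝ → ℝ := fun x => ‖u x‖ ^ 2 with hF3def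
  -- continuity
  have habsu : Continuous fun x => ‖u x‖ := continuous_norm.comp huc
  have hconjc : Continuous fun x => (starRingEnd ℂ) (u x) := continuous_star.comp huc
  have hcoe : Continuous fun x => ((‖u x‖ ^ 2 : ℝ) : ℂ) :=
    Complex.continuous_ofReal.comp (habsu.pow 2)
  have hgc : Continuous g := by
    rw [hgdef]
    exact (((continuous_const.mul hdw1).add (continuous_const.mul hdw2)).add
        (((continuous_const.mul hdu1).add (continuous_const.mul hdu2)).mul hcoe)).mul hconjc
  have hF1c : Continuous F1 := by
    rw [hF1def]
    exact ((continuous_norm.comp hdu1).pow 2).add ((continuous_norm.comp hdu2).pow 2)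
  have hF2c : Continuous F2 := by
    rw [hF2def]
    exact (continuous_norm.comp huc).rpow_const (fun x => Or.inr (by positivity))
  have hF3c : Continuous F3 := habsu.pow 2
  -- compact supports
  have hgs : HasCompactSupport g := by
    apply hsupp.mono
    intro x hx
    simp only [Function.mem_support, ne_eq] at hx ⊢
    intro hu0
    apply hx
    simp [hgdef, hu0]
  have hF1s : HasCompactSupport F1 := by
    have := hsupp.fderiv (𝕜 := ℝ)
    apply this.mono
    intro x hx
    simp only [Function.mem_support, ne_eq] at hx ⊢
    intro hd0
    apply hx
    simp [hF1def, hd0]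
  have hF2s : HasCompactSupport F2 := by
    apply hsupp.mono
    intro x hx
    simp only [Function.mem_support, ne_eq] at hx ⊢
    intro hu0
    apply hx
    simp [hF2def, hu0]
    exact Real.zero_rpow (by positivity)
  have hF3s : HasCompactSupport F3 := by
    apply hsupp.mono
    intro x hx
    simp only [Function.mem_support, ne_eq] at hx ⊢
    intro hu0
    apply hx
    simp [hF3def, hu0]
  -- integrability
  have hgi : Integrable g := hgc.integrable_of_hasCompactSupport hgs
  have hF1i : Integrable F1 := hF1c.integrable_of_hasCompactSupport hF1s
  have hF2i : Integrable F2 := hF2c.integrable_of_hasCompactSupport hF2s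
  have hF3i : Integrable F3 := hF3c.integrable_of_hasCompactSupport hF3s
  -- pointwise bound
  have hpt : ∀ x, ‖g x‖ ≤ ε * F1 x + ε * F2 x + C * F3 x := by
    intro x
    set t : ℝ := ‖u x‖ with htdef
    set a : ℝ := ‖fderiv ℝ u x ((1 : ℝ), (0 : ℝ))‖ with hadef
    set b : ℝ := ‖fderiv ℝ u x ((0 : ℝ), (1 : ℝ))‖ with hbdef
    have ht0 : 0 ≤ t := norm_nonneg _
    have ha0 : 0 ≤ a := norm_nonneg _
    have hb0 : 0 ≤ b := norm_nonneg _
    have htn : ‖u x‖ = t := rfl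
    have hW1 := aux_fderiv_bound u hcd x ((1 : ℝ), (0 : ℝ))
    have hW2 := aux_fderiv_bound u hcd x ((0 : ℝ), (1 : ℝ))
    rw [htn] at hW1 hW2
    -- step 1 : ‖g x‖ ≤ K * t^3 * (a+b)
    have step1 : ‖g x‖ ≤ K * t ^ 3 * (a + b) := by
      have hA : ‖(lam₁.1 * fderiv ℝ w x ((1 : ℝ), (0 : ℝ))
          + lam₁.2 * fderiv ℝ w x ((0 : ℝ), (1 : ℝ))
          + (lam₂.1 * fderiv ℝ u x ((1 : ℝ), (0 : ℝ))
              + lam₂.2 * fderiv ℝ u x ((0 : ℝ), (1 : ℝ))) * ((‖u x‖ ^ 2 : ℝ) : ℂ))‖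
          ≤ ‖lam₁.1‖ * (3 * t ^ 2 * a) + ‖lam₁.2‖ * (3 * t ^ 2 * b)
            + (‖lam₂.1‖ * a + ‖lam₂.2‖ * b) * t ^ 2 := by
        refine le_trans (norm_add_le _ _) ?_
        refine add_le_add (le_trans (norm_add_le _ _) (add_le_add ?_ ?_)) ?_
        · rw [norm_mul]
          exact mul_le_mul_of_nonneg_left hW1 (norm_nonneg _)
        · rw [norm_mul]
          exact mul_le_mul_of_nonneg_left hW2 (norm_nonneg _)
        · rw [norm_mul]
          have h2 : ‖((‖u x‖ ^ 2 : ℝ) : ℂ)‖ = t ^ 2 := by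
            rw [Complex.norm_real, Real.norm_eq_abs, abs_of_nonneg (by positivity)]
          rw [h2]
          refine mul_le_mul_of_nonneg_right ?_ (by positivity)
          refine le_trans (norm_add_le _ _) ?_
          rw [norm_mul, norm_mul]
      have hcu : ‖(starRingEnd ℂ) (u x)‖ = t := by rw [RCLike.norm_conj]
      calc ‖g x‖
          = _ * ‖(starRingEnd ℂ) (u x)‖ := norm_mul _ _
        _ ≤ (‖lam₁.1‖ * (3 * t ^ 2 * a) + ‖lam₁.2‖ * (3 * t ^ 2 * b)
            + (‖lam₂.1‖ * a + ‖lam₂.2‖ * b) * t ^ 2) * t := by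
          rw [hcu]
          exact mul_le_mul_of_nonneg_right hA ht0
        _ ≤ K * t ^ 3 * (a + b) := by
          rw [hKdef]
          nlinarith [norm_nonneg lam₁.1, norm_nonneg lam₁.2, norm_nonneg lam₂.1,
            norm_nonneg lam₂.2, mul_nonneg (mul_nonneg ht0 ht0) (mul_nonneg ht0 ha0),
            mul_nonneg (mul_nonneg ht0 ht0) (mul_nonneg ht0 hb0)]
    have step2 := aux_young K t a b ε M hε hM2ε
    have step3 := hCb t ht0
    have hF1x : F1 x = a ^ 2 + b ^ 2 := by
      rw [hF1def, hadef, hbdef]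
    have hF2x : F2 x = t ^ (2 * σ + 2) := rfl
    have hF3x : F3 x = t ^ 2 := rfl
    rw [hF1x, hF2x, hF3x]
    linarith
  -- integral chain
  have habs : |(∫ x, g x).re| ≤ ∫ x, ‖g x‖ :=
    le_trans (Complex.abs_re_le_norm _) (norm_integral_le_integral_norm (μ := volume) g)
  have hmono : ∫ x, ‖g x‖ ≤ ∫ x, (ε * F1 x + ε * F2 x + C * F3 x) := by
    refine integral_mono hgi.norm ?_ hpt
    exact ((hF1i.const_mul ε).add (hF2i.const_mul ε)).add (hF3i.const_mul C)
  have hsplit : ∫ x, (ε * F1 x + ε * F2 x + C * F3 x)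
      = ε * (∫ x, F1 x) + ε * (∫ x, F2 x) + C * (∫ x, F3 x) := by
    have e1 : ∫ x, (ε * F1 x + ε * F2 x + C * F3 x)
        = (∫ x, (ε * F1 x + ε * F2 x)) + ∫ x, C * F3 x :=
      integral_add ((hF1i.const_mul ε).add (hF2i.const_mul ε)) (hF3i.const_mul C)
    have e2 : ∫ x, (ε * F1 x + ε * F2 x) = (∫ x, ε * F1 x) + ∫ x, ε * F2 x :=
      integral_add (hF1i.const_mul ε) (hF2i.const_mul ε)
    rw [e1, e2, integral_const_mul, integral_const_mul, integral_const_mul]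
  show |(∫ x, g x).re| ≤ ε * (∫ x, F1 x) + ε * (∫ x, F2 x) + C * (∫ x, F3 x)
  calc |(∫ x, g x).re| ≤ ∫ x, ‖g x‖ := habs
    _ ≤ _ := hmono
    _ = _ := hsplit
end

section
/- Let E be a normed space, T > 0, δ ∈ (0, 1/2), and let θ : [0,T] → [0,∞) be Lebesgue integrable. Suppose v : [0,T] → E is Bochner measurable and satisfies ‖v(t) − v(s)‖² ≤ ∫_s^t θ(l) dl for all 0 ≤ s ≤ t ≤ T. Then ∫₀^T ∫₀^T ‖v(t) − v(s)‖² / |t − s|^{1+2δ} dt ds ≤ (T^{1−2δ} / (δ(1 − 2δ))) · ∫₀^T θ(l) dl; in particular the fractional Sobolev seminorm of v of order (δ, 2) is finite. -/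
open MeasureTheory Set
open scoped ENNReal

private lemma stmt12_L1 {q s a b : ℝ} (hsa : s ≤ a) (hab : a ≤ b) (hq1 : q ≠ -1)
    (hq : -1 < q ∨ s < a) :
    ∫⁻ x in Ioc a b, ENNReal.ofReal ((x - s) ^ q)
      = ENNReal.ofReal (((b - s) ^ (q + 1) - (a - s) ^ (q + 1)) / (q + 1)) := by
  have hii : IntervalIntegrable (fun x : ℝ => (x - s) ^ q) volume a b := by
    rcases hq with hq | hq
    · have h := (intervalIntegral.intervalIntegrable_rpow' (r := q)
        (a := a - s) (b := b - s) hq).comp_sub_right s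
      simpa using h
    · apply ContinuousOn.intervalIntegrable
      apply ContinuousOn.rpow_const (by fun_prop)
      intro x hx
      rw [uIcc_of_le hab] at hx
      have : a ≤ x := hx.1
      exact Or.inl (by intro h; nlinarith)
  have hInt : IntegrableOn (fun x : ℝ => (x - s) ^ q) (Ioc a b) volume :=
    (intervalIntegrable_iff_integrableOn_Ioc_of_le hab).mp hii
  have hnn : 0 ≤ᵐ[volume.restrict (Ioc a b)] fun x : ℝ => (x - s) ^ q := by
    filter_upwards [ae_restrict_mem measurableSet_Ioc] with x hx
    exact Real.rpow_nonneg (by linarith [hx.1]) _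
  rw [← ofReal_integral_eq_lintegral_ofReal hInt hnn]
  congr 1
  rw [← intervalIntegral.integral_of_le hab,
    intervalIntegral.integral_comp_sub_right (fun u : ℝ => u ^ q) s,
    integral_rpow]
  rcases hq with hq | hq
  · exact Or.inl hq
  · refine Or.inr ⟨hq1, ?_⟩
    rw [Set.mem_uIcc]
    push_neg
    constructor
    · intro h; linarith
    · intro h; linarith

private lemma stmt12_L2 {q s a b : ℝ} (hbs : b ≤ s) (hab : a ≤ b) (hq1 : q ≠ -1)
    (hq : -1 < q ∨ b < s) :
    ∫⁻ x in Ico a b, ENNReal.ofReal ((s - x) ^ q)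
      = ENNReal.ofReal (((s - a) ^ (q + 1) - (s - b) ^ (q + 1)) / (q + 1)) := by
  rw [Measure.restrict_congr_set Ico_ae_eq_Ioc]
  have hii : IntervalIntegrable (fun x : ℝ => (s - x) ^ q) volume a b := by
    rcases hq with hq | hq
    · have h := (intervalIntegral.intervalIntegrable_rpow' (r := q)
        (a := s - a) (b := s - b) hq).comp_sub_left s
      simpa using h
    · apply ContinuousOn.intervalIntegrable
      apply ContinuousOn.rpow_const (by fun_prop)
      intro x hx
      rw [uIcc_of_le hab] at hx
      have : x ≤ b := hx.2
      exact Or.inl (by intro h; nlinarith)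
  have hInt : IntegrableOn (fun x : ℝ => (s - x) ^ q) (Ioc a b) volume :=
    (intervalIntegrable_iff_integrableOn_Ioc_of_le hab).mp hii
  have hnn : 0 ≤ᵐ[volume.restrict (Ioc a b)] fun x : ℝ => (s - x) ^ q := by
    filter_upwards [ae_restrict_mem measurableSet_Ioc] with x hx
    exact Real.rpow_nonneg (by linarith [hx.2]) _
  rw [← ofReal_integral_eq_lintegral_ofReal hInt hnn]
  congr 1
  rw [← intervalIntegral.integral_of_le hab,
    intervalIntegral.integral_comp_sub_left (fun u : ℝ => u ^ q) s,
    integral_rpow]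
  rcases hq with hq | hq
  · exact Or.inl hq
  · refine Or.inr ⟨hq1, ?_⟩
    rw [Set.mem_uIcc]
    push_neg
    constructor
    · intro h; linarith
    · intro h; linarith

private lemma stmt12_helperR {δ : ℝ} (hδ0 : 0 < δ) (Θ : ℝ → ℝ≥0∞) (hΘ : Measurable Θ)
    (hc : ∀ x, Θ x ≠ ⊤) {a b : ℝ} (hab : a ≤ b) :
    ∫⁻ t in Ioc a b, (∫⁻ l in Ioc a t, Θ l) * ENNReal.ofReal ((t - a) ^ (-(1 + 2 * δ)))
      ≤ ∫⁻ l in Ioc a b, Θ l * ENNReal.ofReal ((l - a) ^ (-(2 * δ)) / (2 * δ)) := by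
  set k : ℝ → ℝ≥0∞ := fun t => ENNReal.ofReal ((t - a) ^ (-(1 + 2 * δ))) with hk
  have hkmeas : Measurable k := by fun_prop
  have step1 : ∀ t ∈ Ioc a b, (∫⁻ l in Ioc a t, Θ l) * k t
      = ∫⁻ l in Ioc a b, (Iic t).indicator Θ l * k t := by
    intro t ht
    rw [lintegral_mul_const' (k t) _ (by simp [hk]),
      lintegral_indicator measurableSet_Iic, Measure.restrict_restrict measurableSet_Iic]
    have : Iic t ∩ Ioc a b = Ioc a t := by
      ext x
      simp only [mem_inter_iff, mem_Iic, mem_Ioc]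
      constructor
      · rintro ⟨h1, h2, h3⟩; exact ⟨h2, h1⟩
      · rintro ⟨h1, h2⟩; exact ⟨h2, h1, le_trans h2 ht.2⟩
    rw [this]
  have meas : AEMeasurable (Function.uncurry fun t l => (Iic t).indicator Θ l * k t)
      ((volume.restrict (Ioc a b)).prod (volume.restrict (Ioc a b))) := by
    apply Measurable.aemeasurable
    have heq : (Function.uncurry fun t l => (Iic t).indicator Θ l * k t)
        = fun p : ℝ × ℝ => ({q : ℝ × ℝ | q.2 ≤ q.1}.indicator (fun q => Θ q.2) p) * k p.1 := by
      ext ⟨t, l⟩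
      by_cases h : l ≤ t <;>
        simp [Function.uncurry, Set.indicator, h]
    rw [heq]
    exact ((hΘ.comp measurable_snd).indicator
      (measurableSet_le measurable_snd measurable_fst)).mul (hkmeas.comp measurable_fst)
  calc
    ∫⁻ t in Ioc a b, (∫⁻ l in Ioc a t, Θ l) * k t
      = ∫⁻ t in Ioc a b, ∫⁻ l in Ioc a b, (Iic t).indicator Θ l * k t :=
        setLIntegral_congr_fun measurableSet_Ioc step1
    _ = ∫⁻ l in Ioc a b, ∫⁻ t in Ioc a b, (Iic t).indicator Θ l * k t :=
        lintegral_lintegral_swap meas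
    _ ≤ ∫⁻ l in Ioc a b, Θ l * ENNReal.ofReal ((l - a) ^ (-(2 * δ)) / (2 * δ)) := by
        apply lintegral_mono_ae
        filter_upwards [ae_restrict_mem measurableSet_Ioc] with l hl
        have hstep : (fun t => (Iic t).indicator Θ l * k t)
            = fun t => Θ l * (Ici l).indicator k t := by
          ext t
          by_cases h : l ≤ t <;> simp [Set.indicator, h]
        rw [hstep, lintegral_const_mul' _ _ (hc l)]
        apply mul_le_mul_right
        rw [lintegral_indicator measurableSet_Ici, Measure.restrict_restrict measurableSet_Ici]
        have hset : Ici l ∩ Ioc a b = Icc l b := by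
          ext x
          simp only [mem_inter_iff, mem_Ici, mem_Ioc, mem_Icc]
          constructor
          · rintro ⟨h1, _, h3⟩; exact ⟨h1, h3⟩
          · rintro ⟨h1, h2⟩; exact ⟨h1, lt_of_lt_of_le hl.1 h1, h2⟩
        rw [hset, ← Measure.restrict_congr_set Ioc_ae_eq_Icc, hk]
        rw [stmt12_L1 (le_of_lt hl.1) hl.2 (by intro h; nlinarith) (Or.inr hl.1)]
        have he : -(1 + 2 * δ) + 1 = -(2 * δ) := by ring
        rw [he]
        apply ENNReal.ofReal_le_ofReal
        rw [show ((b - a) ^ (-(2 * δ)) - (l - a) ^ (-(2 * δ))) / (-(2 * δ))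
            = ((l - a) ^ (-(2 * δ)) - (b - a) ^ (-(2 * δ))) / (2 * δ) by ring]
        apply div_le_div_of_nonneg_right ?_ (by linarith) |>.trans_eq rfl
        · exact sub_le_self _ (Real.rpow_nonneg (by linarith [hab]) _)

private lemma stmt12_helperL {δ : ℝ} (hδ0 : 0 < δ) (Θ : ℝ → ℝ≥0∞) (hΘ : Measurable Θ)
    (hc : ∀ x, Θ x ≠ ⊤) {a b : ℝ} (hab : a ≤ b) :
    ∫⁻ t in Ico a b, (∫⁻ l in Ioc t b, Θ l) * ENNReal.ofReal ((b - t) ^ (-(1 + 2 * δ)))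
      ≤ ∫⁻ l in Ioc a b, Θ l * ENNReal.ofReal ((b - l) ^ (-(2 * δ)) / (2 * δ)) := by
  set k : ℝ → ℝ≥0∞ := fun t => ENNReal.ofReal ((b - t) ^ (-(1 + 2 * δ))) with hk
  have hkmeas : Measurable k := by fun_prop
  have step1 : ∀ t ∈ Ico a b, (∫⁻ l in Ioc t b, Θ l) * k t
      = ∫⁻ l in Ioc a b, (Ioi t).indicator Θ l * k t := by
    intro t ht
    rw [lintegral_mul_const' (k t) _ (by simp [hk]),
      lintegral_indicator measurableSet_Ioi, Measure.restrict_restrict measurableSet_Ioi]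
    have : Ioi t ∩ Ioc a b = Ioc t b := by
      ext x
      simp only [mem_inter_iff, mem_Ioi, mem_Ioc]
      constructor
      · rintro ⟨h1, _, h3⟩; exact ⟨h1, h3⟩
      · rintro ⟨h1, h2⟩; exact ⟨h1, lt_of_le_of_lt ht.1 h1, h2⟩
    rw [this]
  have meas : AEMeasurable (Function.uncurry fun t l => (Ioi t).indicator Θ l * k t)
      ((volume.restrict (Ico a b)).prod (volume.restrict (Ioc a b))) := by
    apply Measurable.aemeasurable
    have heq : (Function.uncurry fun t l => (Ioi t).indicator Θ l * k t)
        = fun p : ℝ × ℝ => ({q : ℝ × ℝ | q.1 < q.2}.indicator (fun q => Θ q.2) p) * k p.1 := by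
      ext ⟨t, l⟩
      by_cases h : t < l <;>
        simp [Function.uncurry, Set.indicator, h]
    rw [heq]
    exact ((hΘ.comp measurable_snd).indicator
      (measurableSet_lt measurable_fst measurable_snd)).mul (hkmeas.comp measurable_fst)
  have hbne : ∀ᵐ l : ℝ ∂volume.restrict (Ioc a b), l ≠ b := by
    apply ae_restrict_of_ae
    refine ae_iff.mpr ?_
    have : {l : ℝ | ¬ l ≠ b} = {b} := by ext x; simp
    rw [this]
    exact Real.volume_singleton
  calc
    ∫⁻ t in Ico a b, (∫⁻ l in Ioc t b, Θ l) * k t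
      = ∫⁻ t in Ico a b, ∫⁻ l in Ioc a b, (Ioi t).indicator Θ l * k t :=
        setLIntegral_congr_fun measurableSet_Ico step1
    _ = ∫⁻ l in Ioc a b, ∫⁻ t in Ico a b, (Ioi t).indicator Θ l * k t :=
        lintegral_lintegral_swap meas
    _ ≤ ∫⁻ l in Ioc a b, Θ l * ENNReal.ofReal ((b - l) ^ (-(2 * δ)) / (2 * δ)) := by
        apply lintegral_mono_ae
        filter_upwards [ae_restrict_mem measurableSet_Ioc, hbne] with l hl hlb
        have hlb' : l < b := lt_of_le_of_ne hl.2 hlb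
        have hstep : (fun t => (Ioi t).indicator Θ l * k t)
            = fun t => Θ l * (Iio l).indicator k t := by
          ext t
          by_cases h : t < l <;> simp [Set.indicator, h]
        rw [hstep, lintegral_const_mul' _ _ (hc l)]
        apply mul_le_mul_right
        rw [lintegral_indicator measurableSet_Iio, Measure.restrict_restrict measurableSet_Iio]
        have hset : Iio l ∩ Ico a b = Ico a l := by
          ext x
          simp only [mem_inter_iff, mem_Iio, mem_Ico]
          constructor
          · rintro ⟨h1, h2, _⟩; exact ⟨h2, h1⟩
          · rintro ⟨h1, h2⟩; exact ⟨h2, h1, lt_of_lt_of_le h2 hl.2⟩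
        rw [hset, hk]
        rw [stmt12_L2 (le_of_lt hlb') (by linarith [hl.1]) (by intro h; nlinarith) (Or.inr hlb')]
        have he : -(1 + 2 * δ) + 1 = -(2 * δ) := by ring
        rw [he]
        apply ENNReal.ofReal_le_ofReal
        rw [show ((b - a) ^ (-(2 * δ)) - (b - l) ^ (-(2 * δ))) / (-(2 * δ))
            = ((b - l) ^ (-(2 * δ)) - (b - a) ^ (-(2 * δ))) / (2 * δ) by ring]
        apply div_le_div_of_nonneg_right ?_ (by linarith) |>.trans_eq rfl
        · exact sub_le_self _ (Real.rpow_nonneg (by linarith) _)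

set_option maxHeartbeats 1000000 in
/-- If `‖v(t) − v(s)‖² ≤ ∫_s^t θ(l) dl` for `0 ≤ s ≤ t ≤ T` and `δ ∈ (0, 1/2)`, then
`∫₀^T ∫₀^T ∫₀^T ‖v(t) − v(s)‖²/|t−s|^{1+2δ} dt ds ≤ (T^{1−2δ}/(δ(1−2δ))) ∫₀^T θ(l) dl`;
in particular the fractional Sobolev seminorm of order `(δ,2)` of `v` is finite. -/
theorem stmt12 {E : Type*} [NormedAddCommGroup E]
    (T δ : ℝ) (hT : 0 < T) (hδ0 : 0 < δ) (hδ : δ < 1 / 2)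
    (θ : ℝ → ℝ) (hθ0 : ∀ l, 0 ≤ θ l) (hθint : IntegrableOn θ (Icc (0 : ℝ) T))
    (v : ℝ → E) (hv : StronglyMeasurable v)
    (hvθ : ∀ s t : ℝ, 0 ≤ s → s ≤ t → t ≤ T → ‖v t - v s‖ ^ 2 ≤ ∫ l in s..t, θ l) :
    (∫⁻ s in Icc (0 : ℝ) T, ∫⁻ t in Icc (0 : ℝ) T,
        ENNReal.ofReal (‖v t - v s‖ ^ 2 / |t - s| ^ (1 + 2 * δ)))
      ≤ ENNReal.ofReal (T ^ (1 - 2 * δ) / (δ * (1 - 2 * δ)) * ∫ l in Icc (0 : ℝ) T, θ l) ∧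
    (∫⁻ s in Icc (0 : ℝ) T, ∫⁻ t in Icc (0 : ℝ) T,
        ENNReal.ofReal (‖v t - v s‖ ^ 2 / |t - s| ^ (1 + 2 * δ))) < ⊤ := by
  classical
  obtain ⟨g, hgsm, hgae⟩ := hθint.1
  set Θ : ℝ → ℝ≥0∞ := fun l => ENNReal.ofReal (g l) with hΘdef
  have hΘ : Measurable Θ := hgsm.measurable.ennreal_ofReal
  have hΘtop : ∀ l, Θ l ≠ ⊤ := fun l => ENNReal.ofReal_ne_top
  have hofReal : ∀ s t : ℝ, 0 ≤ s → s ≤ t → t ≤ T →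
      ENNReal.ofReal (∫ l in s..t, θ l) = ∫⁻ l in Ioc s t, Θ l := by
    intro s t h0 hst hT'
    have hss : Ioc s t ⊆ Icc (0 : ℝ) T := fun x hx =>
      ⟨le_trans h0 (le_of_lt hx.1), le_trans hx.2 hT'⟩
    have hae : θ =ᵐ[volume.restrict (Ioc s t)] g :=
      ae_restrict_of_ae_restrict_of_subset hss hgae
    have hnn : 0 ≤ᵐ[volume.restrict (Ioc s t)] g := by
      filter_upwards [hae] with l hl
      rw [← hl]; exact hθ0 l
    have hint : IntegrableOn g (Ioc s t) volume := (hθint.mono_set hss).congr hae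
    rw [intervalIntegral.integral_of_le hst, integral_congr_ae hae,
      ofReal_integral_eq_lintegral_ofReal hint hnn]
  have hoc : ∀ s t : ℝ, 0 ≤ s → s < t → t ≤ T →
      ENNReal.ofReal (‖v t - v s‖ ^ 2 / |t - s| ^ (1 + 2 * δ))
        ≤ (∫⁻ l in Ioc s t, Θ l) * ENNReal.ofReal ((t - s) ^ (-(1 + 2 * δ))) := by
    intro s t h0 hst hT'
    have hts : (0 : ℝ) < t - s := by linarith
    have hr : ‖v t - v s‖ ^ 2 / |t - s| ^ (1 + 2 * δ)
        ≤ (∫ l in s..t, θ l) * (t - s) ^ (-(1 + 2 * δ)) := by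
      rw [abs_of_pos hts, Real.rpow_neg hts.le, div_eq_mul_inv]
      exact mul_le_mul_of_nonneg_right (hvθ s t h0 hst.le hT') (by positivity)
    refine le_trans (ENNReal.ofReal_le_ofReal hr) ?_
    rw [ENNReal.ofReal_mul (intervalIntegral.integral_nonneg hst.le fun x _ => hθ0 x),
      hofReal s t h0 hst.le hT']
  have stepA : ∀ s ∈ Icc (0 : ℝ) T,
      (∫⁻ t in Icc (0 : ℝ) T, ENNReal.ofReal (‖v t - v s‖ ^ 2 / |t - s| ^ (1 + 2 * δ)))
        ≤ ∫⁻ l in Icc (0 : ℝ) T, Θ l * ENNReal.ofReal (|l - s| ^ (-(2 * δ)) / (2 * δ)) := by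
    intro s hs
    obtain ⟨h0s, hsT⟩ := hs
    have hsplit : Icc (0 : ℝ) T = Icc 0 s ∪ Ioc s T := (Icc_union_Ioc_eq_Icc h0s hsT).symm
    have hdisj : Disjoint (Icc (0 : ℝ) s) (Ioc s T) := by
      rw [Set.disjoint_left]
      rintro x ⟨_, h1⟩ ⟨h2, _⟩
      linarith
    rw [hsplit, lintegral_union measurableSet_Ioc hdisj]
    have hL : (∫⁻ t in Icc (0 : ℝ) s, ENNReal.ofReal (‖v t - v s‖ ^ 2 / |t - s| ^ (1 + 2 * δ)))
        ≤ ∫⁻ l in Ioc (0 : ℝ) s, Θ l * ENNReal.ofReal ((s - l) ^ (-(2 * δ)) / (2 * δ)) := by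
      rw [← Measure.restrict_congr_set Ico_ae_eq_Icc]
      refine le_trans ?_ (stmt12_helperL hδ0 Θ hΘ hΘtop h0s)
      apply lintegral_mono_ae
      filter_upwards [ae_restrict_mem measurableSet_Ico] with t ht
      have h1 : ‖v t - v s‖ = ‖v s - v t‖ := norm_sub_rev _ _
      have h2 : |t - s| = |s - t| := abs_sub_comm _ _
      rw [h1, h2]
      exact hoc t s ht.1 ht.2 hsT
    have hR : (∫⁻ t in Ioc s T, ENNReal.ofReal (‖v t - v s‖ ^ 2 / |t - s| ^ (1 + 2 * δ)))
        ≤ ∫⁻ l in Ioc s T, Θ l * ENNReal.ofReal ((l - s) ^ (-(2 * δ)) / (2 * δ)) := by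
      refine le_trans ?_ (stmt12_helperR hδ0 Θ hΘ hΘtop hsT)
      apply lintegral_mono_ae
      filter_upwards [ae_restrict_mem measurableSet_Ioc] with t ht
      exact hoc s t h0s ht.1 ht.2
    refine le_trans (add_le_add hL hR) ?_
    have e1 : (∫⁻ l in Ioc (0 : ℝ) s, Θ l * ENNReal.ofReal ((s - l) ^ (-(2 * δ)) / (2 * δ)))
        = ∫⁻ l in Ioc (0 : ℝ) s, Θ l * ENNReal.ofReal (|l - s| ^ (-(2 * δ)) / (2 * δ)) := by
      apply setLIntegral_congr_fun measurableSet_Ioc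
      intro l hl
      beta_reduce
      rw [abs_sub_comm, abs_of_nonneg (by linarith [hl.2] : (0 : ℝ) ≤ s - l)]
    have e2 : (∫⁻ l in Ioc s T, Θ l * ENNReal.ofReal ((l - s) ^ (-(2 * δ)) / (2 * δ)))
        = ∫⁻ l in Ioc s T, Θ l * ENNReal.ofReal (|l - s| ^ (-(2 * δ)) / (2 * δ)) := by
      apply setLIntegral_congr_fun measurableSet_Ioc
      intro l hl
      beta_reduce
      rw [abs_of_nonneg (by linarith [hl.1] : (0 : ℝ) ≤ l - s)]
    rw [e1, e2, ← lintegral_union measurableSet_Ioc (Ioc_disjoint_Ioc_of_le le_rfl),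
      Ioc_union_Ioc_eq_Ioc h0s hsT]
    rw [Icc_union_Ioc_eq_Icc h0s hsT]
    exact lintegral_mono_set Ioc_subset_Icc_self
  have measW : AEMeasurable
      (Function.uncurry fun s l => Θ l * ENNReal.ofReal (|l - s| ^ (-(2 * δ)) / (2 * δ)))
      ((volume.restrict (Icc (0 : ℝ) T)).prod (volume.restrict (Icc (0 : ℝ) T))) := by
    apply Measurable.aemeasurable
    exact (hΘ.comp measurable_snd).mul (by fun_prop)
  have kernel2 : ∀ l ∈ Icc (0 : ℝ) T,
      (∫⁻ s in Icc (0 : ℝ) T, ENNReal.ofReal (|l - s| ^ (-(2 * δ))))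
        ≤ ENNReal.ofReal (2 * (T ^ (1 - 2 * δ) / (1 - 2 * δ))) := by
    intro l hl
    have h12 : (0 : ℝ) < 1 - 2 * δ := by linarith
    have hsplit : Icc (0 : ℝ) T = Icc 0 l ∪ Ioc l T := (Icc_union_Ioc_eq_Icc hl.1 hl.2).symm
    have hdisj : Disjoint (Icc (0 : ℝ) l) (Ioc l T) := by
      rw [Set.disjoint_left]
      rintro x ⟨_, h1⟩ ⟨h2, _⟩
      linarith
    rw [hsplit, lintegral_union measurableSet_Ioc hdisj]
    have he : -(2 * δ) + 1 = 1 - 2 * δ := by ring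
    have k1 : (∫⁻ s in Icc (0 : ℝ) l, ENNReal.ofReal (|l - s| ^ (-(2 * δ))))
        ≤ ENNReal.ofReal (T ^ (1 - 2 * δ) / (1 - 2 * δ)) := by
      rw [← Measure.restrict_congr_set Ico_ae_eq_Icc]
      have e : (∫⁻ s in Ico (0 : ℝ) l, ENNReal.ofReal (|l - s| ^ (-(2 * δ))))
          = ∫⁻ s in Ico (0 : ℝ) l, ENNReal.ofReal ((l - s) ^ (-(2 * δ))) := by
        apply setLIntegral_congr_fun measurableSet_Ico ?_
        intro s hs
        beta_reduce
        rw [abs_of_nonneg (by linarith [hs.2] : (0 : ℝ) ≤ l - s)]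
      rw [e, stmt12_L2 le_rfl hl.1 (by intro h; nlinarith) (Or.inl (by linarith)), he]
      apply ENNReal.ofReal_le_ofReal
      have e2 : ((l - 0) ^ (1 - 2 * δ) - (l - l) ^ (1 - 2 * δ)) / (1 - 2 * δ)
          = l ^ (1 - 2 * δ) / (1 - 2 * δ) := by
        rw [sub_self, Real.zero_rpow (by linarith : (1 : ℝ) - 2 * δ ≠ 0)]
        norm_num
      rw [e2]
      exact div_le_div_of_nonneg_right (Real.rpow_le_rpow hl.1 hl.2 h12.le) h12.le
    have k2 : (∫⁻ s in Ioc l T, ENNReal.ofReal (|l - s| ^ (-(2 * δ))))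
        ≤ ENNReal.ofReal (T ^ (1 - 2 * δ) / (1 - 2 * δ)) := by
      have e : (∫⁻ s in Ioc l T, ENNReal.ofReal (|l - s| ^ (-(2 * δ))))
          = ∫⁻ s in Ioc l T, ENNReal.ofReal ((s - l) ^ (-(2 * δ))) := by
        apply setLIntegral_congr_fun measurableSet_Ioc ?_
        intro s hs
        beta_reduce
        rw [abs_of_nonpos (by linarith [hs.1] : l - s ≤ (0 : ℝ)), neg_sub]
      rw [e, stmt12_L1 le_rfl hl.2 (by intro h; nlinarith) (Or.inl (by linarith)), he]
      apply ENNReal.ofReal_le_ofReal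
      have e2 : ((T - l) ^ (1 - 2 * δ) - (l - l) ^ (1 - 2 * δ)) / (1 - 2 * δ)
          = (T - l) ^ (1 - 2 * δ) / (1 - 2 * δ) := by
        rw [sub_self, Real.zero_rpow (by linarith : (1 : ℝ) - 2 * δ ≠ 0)]
        norm_num
      rw [e2]
      exact div_le_div_of_nonneg_right
        (Real.rpow_le_rpow (by linarith [hl.2]) (by linarith [hl.1]) h12.le) h12.le
    calc _ ≤ ENNReal.ofReal (T ^ (1 - 2 * δ) / (1 - 2 * δ))
          + ENNReal.ofReal (T ^ (1 - 2 * δ) / (1 - 2 * δ)) := add_le_add k1 k2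
      _ = ENNReal.ofReal (2 * (T ^ (1 - 2 * δ) / (1 - 2 * δ))) := by
          rw [← ENNReal.ofReal_add (by positivity) (by positivity)]
          congr 1
          ring
  have hΘint : (∫⁻ l in Icc (0 : ℝ) T, Θ l) = ENNReal.ofReal (∫ l in Icc (0 : ℝ) T, θ l) := by
    have hnn : 0 ≤ᵐ[volume.restrict (Icc (0 : ℝ) T)] g := by
      filter_upwards [hgae] with l hl
      rw [← hl]; exact hθ0 l
    rw [integral_congr_ae hgae, ofReal_integral_eq_lintegral_ofReal (hθint.congr hgae) hnn]
  have h12 : (0 : ℝ) < 1 - 2 * δ := by linarith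
  have key : (∫⁻ s in Icc (0 : ℝ) T, ∫⁻ t in Icc (0 : ℝ) T,
        ENNReal.ofReal (‖v t - v s‖ ^ 2 / |t - s| ^ (1 + 2 * δ)))
      ≤ ENNReal.ofReal (T ^ (1 - 2 * δ) / (δ * (1 - 2 * δ)) * ∫ l in Icc (0 : ℝ) T, θ l) := by
    calc (∫⁻ s in Icc (0 : ℝ) T, ∫⁻ t in Icc (0 : ℝ) T,
          ENNReal.ofReal (‖v t - v s‖ ^ 2 / |t - s| ^ (1 + 2 * δ)))
        ≤ ∫⁻ s in Icc (0 : ℝ) T, ∫⁻ l in Icc (0 : ℝ) T,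
            Θ l * ENNReal.ofReal (|l - s| ^ (-(2 * δ)) / (2 * δ)) := by
          apply lintegral_mono_ae
          filter_upwards [ae_restrict_mem measurableSet_Icc] with s hs
          exact stepA s hs
      _ = ∫⁻ l in Icc (0 : ℝ) T, ∫⁻ s in Icc (0 : ℝ) T,
            Θ l * ENNReal.ofReal (|l - s| ^ (-(2 * δ)) / (2 * δ)) :=
          lintegral_lintegral_swap measW
      _ ≤ ∫⁻ l in Icc (0 : ℝ) T, Θ l *
            (ENNReal.ofReal (2 * (T ^ (1 - 2 * δ) / (1 - 2 * δ))) * ENNReal.ofReal ((2 * δ)⁻¹)) := by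
          apply lintegral_mono_ae
          filter_upwards [ae_restrict_mem measurableSet_Icc] with l hl
          rw [lintegral_const_mul' _ _ (hΘtop l)]
          apply mul_le_mul_right
          have e3 : ∀ s : ℝ, ENNReal.ofReal (|l - s| ^ (-(2 * δ)) / (2 * δ))
              = ENNReal.ofReal (|l - s| ^ (-(2 * δ))) * ENNReal.ofReal ((2 * δ)⁻¹) := by
            intro s
            rw [div_eq_mul_inv, ENNReal.ofReal_mul (Real.rpow_nonneg (abs_nonneg _) _)]
          simp_rw [e3]
          rw [lintegral_mul_const' _ _ (by simp)]
          exact mul_le_mul_left (kernel2 l hl) _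
      _ = (∫⁻ l in Icc (0 : ℝ) T, Θ l) *
            (ENNReal.ofReal (2 * (T ^ (1 - 2 * δ) / (1 - 2 * δ))) * ENNReal.ofReal ((2 * δ)⁻¹)) :=
          lintegral_mul_const' _ _ (ENNReal.mul_ne_top ENNReal.ofReal_ne_top ENNReal.ofReal_ne_top)
      _ = ENNReal.ofReal (T ^ (1 - 2 * δ) / (δ * (1 - 2 * δ)) * ∫ l in Icc (0 : ℝ) T, θ l) := by
          rw [hΘint, ← ENNReal.ofReal_mul (by positivity), ← ENNReal.ofReal_mul ?hnn]
          · congr 1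
            have hδne : δ ≠ 0 := ne_of_gt hδ0
            have h12ne : (1 - 2 * δ) ≠ 0 := ne_of_gt h12
            field_simp
          case hnn =>
            have : (0 : ℝ) ≤ ∫ l in Icc (0 : ℝ) T, θ l :=
              setIntegral_nonneg measurableSet_Icc fun x _ => hθ0 x
            positivity
  exact ⟨key, lt_of_le_of_lt key ENNReal.ofReal_lt_top⟩
end
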